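/- arXiv:2304.06515 — 5 statements merged into one kernel-verified Lean document; each statement's English description precedes it below -/
import Mathlib

section
/- Let f be integrable in the generalized sense on [0,∞[ with homogeneous coefficients f_k at 0 (so f(r) − Σ_{k∈Ω} f_k r^k is integrable on ]0,1[ and f is integrable on [1,∞[). Then gen∫₀^∞ f(r) dr = lim_{δ→0⁺} ( ∫_δ^∞ f(r) dr + Σ_{k∈Ω, k≠−1} f_k δ^{k+1}/(k+1) + f_{−1} ln δ ). -/
open MeasureTheory Set Complex Real

/-- The generalized integral of `f` over `[0,∞[` with respect to the data
`(Ω, c)` of homogeneous terms `c k * r ^ k`, `k ∈ Ω`, at `0`. -/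
noncomputable def genInt (f : ℝ → ℂ) (Ω : Finset ℂ) (c : ℂ → ℂ) : ℂ :=
  (∑ k ∈ Ω, if k = -1 then 0 else c k / (k + 1))
  + (∫ r in Ioo (0:ℝ) 1, (f r - ∑ k ∈ Ω, c k * (r : ℂ) ^ k))
  + ∫ r in Ioi (1:ℝ), f r

/-- `f` is integrable in the generalized sense with data `(Ω, c)`:
it is integrable on `]1,∞[` and, after subtracting the homogeneous terms,
integrable on `]0,1[`. -/
def GenIntegrable (f : ℝ → ℂ) (Ω : Finset ℂ) (c : ℂ → ℂ) : Prop :=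
  IntegrableOn f (Ioi 1) ∧
  IntegrableOn (fun r => f r - ∑ k ∈ Ω, c k * (r : ℂ) ^ k) (Ioo 0 1)

theorem genInt_eq_lim (f : ℝ → ℂ) (Ω : Finset ℂ) (c : ℂ → ℂ)
    (h : GenIntegrable f Ω c) :
    Filter.Tendsto
      (fun δ : ℝ =>
        (∫ r in Ioi δ, f r)
        + (∑ k ∈ Ω, if k = -1 then 0 else c k * (δ : ℂ) ^ (k + 1) / (k + 1))
        + (if (-1 : ℂ) ∈ Ω then c (-1) else 0) * Real.log δ)
      (nhdsWithin 0 (Ioi 0)) (nhds (genInt f Ω c)) := by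
  set g : ℝ → ℂ := fun r => f r - ∑ k ∈ Ω, c k * (r : ℂ) ^ k with hg_def
  set p : ℝ → ℂ := fun r => ∑ k ∈ Ω, c k * (r : ℂ) ^ k with hp_def
  set S : ℂ := ∑ k ∈ Ω, if k = -1 then 0 else c k / (k + 1) with hS_def
  have hg : IntegrableOn g (Ioo 0 1) := h.2
  -- the indicator trick
  set g' : ℝ → ℂ := (Ioo (0:ℝ) 1).indicator g with hg'_def
  have hg' : Integrable g' := (integrable_indicator_iff measurableSet_Ioo).2 hg
  -- continuity of single powers
  have hcontk : ∀ (k : ℂ) (δ : ℝ), 0 < δ →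
      ContinuousOn (fun r : ℝ => (r : ℂ) ^ k) (Icc δ 1) := by
    intro k δ hδ
    intro r hr
    refine ContinuousAt.continuousWithinAt ?_
    exact (continuousAt_cpow_const
      (Complex.ofReal_mem_slitPlane.2 (hδ.trans_le hr.1))).comp
      Complex.continuous_ofReal.continuousAt
  -- key pointwise identity
  have key : ∀ δ ∈ Ioo (0:ℝ) 1,
      ((∫ r in Ioi δ, f r)
        + (∑ k ∈ Ω, if k = -1 then 0 else c k * (δ : ℂ) ^ (k + 1) / (k + 1))
        + (if (-1 : ℂ) ∈ Ω then c (-1) else 0) * Real.log δ)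
      = S + (∫ r in Ioo δ 1, g r) + ∫ r in Ioi 1, f r := by
    intro δ hδ
    obtain ⟨hδ0, hδ1⟩ := hδ
    have hik : ∀ k : ℂ, IntegrableOn (fun r : ℝ => c k * (r : ℂ) ^ k) (Ioo δ 1) := by
      intro k
      exact ((continuousOn_const.mul (hcontk k δ hδ0)).integrableOn_Icc).mono_set
        Ioo_subset_Icc_self
    have hp : IntegrableOn p (Ioo δ 1) :=
      integrable_finset_sum _ (fun k _ => hik k)
    have hgδ : IntegrableOn g (Ioo δ 1) :=
      hg.mono_set (Ioo_subset_Ioo hδ0.le le_rfl)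
    have hfδ : IntegrableOn f (Ioo δ 1) := by
      have : IntegrableOn (fun r => g r + p r) (Ioo δ 1) := hgδ.add hp
      exact this.congr_fun (fun r _ => by simp [hg_def, hp_def]) measurableSet_Ioo
    -- split the integral over Ioi δ
    have hsplit : (∫ r in Ioi δ, f r)
        = (∫ r in Ioo δ 1, f r) + ∫ r in Ioi 1, f r := by
      rw [← Ioo_union_Ici_eq_Ioi hδ1,
        setIntegral_union ((Set.Iio_disjoint_Ici le_rfl).mono_left
          Set.Ioo_subset_Iio_self) measurableSet_Ici hfδ
          ((integrableOn_Ici_iff_integrableOn_Ioi).2 h.1),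
        integral_Ici_eq_integral_Ioi]
    -- split f = g + p on Ioo δ 1
    have hfgp : (∫ r in Ioo δ 1, f r)
        = (∫ r in Ioo δ 1, g r) + ∫ r in Ioo δ 1, p r := by
      rw [← integral_add hgδ hp]
      exact setIntegral_congr_fun measurableSet_Ioo
        (fun r _ => by simp [hg_def, hp_def])
    -- compute the integral of p
    have hzero : (0:ℝ) ∉ Set.uIcc δ 1 := by
      rw [Set.uIcc_of_le hδ1.le]
      intro h0
      exact absurd h0.1 (not_le.2 hδ0)
    have hpk : ∀ k : ℂ, (∫ r in Ioo δ 1, (r : ℂ) ^ k)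
        = if k = -1 then ((-(Real.log δ) : ℝ) : ℂ) else (1 - (δ:ℂ) ^ (k+1)) / (k+1) := by
      intro k
      have h1 : (∫ r in Ioo δ 1, (r : ℂ) ^ k) = ∫ r in δ..1, (r : ℂ) ^ k := by
        rw [intervalIntegral.integral_of_le hδ1.le, integral_Ioc_eq_integral_Ioo]
      by_cases hk : k = -1
      · subst hk
        simp only [if_pos rfl]
        rw [h1]
        have : ∀ r : ℝ, r ∈ Set.uIcc δ 1 → (r : ℂ) ^ (-1 : ℂ) = ((r⁻¹ : ℝ) : ℂ) := by
          intro r _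
          rw [Complex.cpow_neg_one, Complex.ofReal_inv]
        rw [intervalIntegral.integral_congr this, intervalIntegral.integral_ofReal,
          integral_inv hzero]
        norm_num [Real.log_inv]
      · rw [if_neg hk, h1, integral_cpow (Or.inr ⟨hk, hzero⟩)]
        norm_num
    have hintp : (∫ r in Ioo δ 1, p r)
        = ∑ k ∈ Ω, c k * (if k = -1 then ((-(Real.log δ) : ℝ) : ℂ)
            else (1 - (δ:ℂ) ^ (k+1)) / (k+1)) := by
      rw [hp_def]
      rw [integral_finset_sum _ (fun k _ => hik k)]
      refine Finset.sum_congr rfl (fun k _ => ?_)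
      rw [integral_const_mul, hpk k]
    -- now the algebra
    rw [hsplit, hfgp, hintp]
    have hL : (if (-1 : ℂ) ∈ Ω then c (-1) else 0) * (Real.log δ : ℂ)
        = ∑ k ∈ Ω, (if k = -1 then c k * (Real.log δ : ℂ) else 0) := by
      rw [Finset.sum_ite_eq' Ω (-1) (fun k => c k * (Real.log δ : ℂ))]
      split <;> simp
    rw [hL]
    have hsum : (∑ k ∈ Ω, ((c k * (if k = -1 then ((-(Real.log δ) : ℝ) : ℂ)
            else (1 - (δ:ℂ) ^ (k+1)) / (k+1))
          + if k = -1 then 0 else c k * (δ : ℂ) ^ (k + 1) / (k + 1))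
          + if k = -1 then c k * (Real.log δ : ℂ) else 0))
        = ∑ k ∈ Ω, if k = -1 then 0 else c k / (k + 1) := by
      refine Finset.sum_congr rfl (fun k _ => ?_)
      by_cases hk : k = -1
      · subst hk
        simp only [if_pos rfl]
        push_cast
        ring
      · simp only [if_neg hk]
        have hk1 : k + 1 ≠ 0 := by
          intro h0
          exact hk (by linear_combination h0)
        field_simp
        ring
    rw [Finset.sum_add_distrib, Finset.sum_add_distrib] at hsum
    simp only [hS_def]
    linear_combination hsum
  -- the limit
  have hIoo : Ioo (0:ℝ) 1 ∈ nhdsWithin (0:ℝ) (Ioi 0) := by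
    apply Ioo_mem_nhdsGT_of_mem
    constructor <;> norm_num
  have hF : Filter.Tendsto (fun δ : ℝ => ∫ r in Ioo δ 1, g r)
      (nhdsWithin 0 (Ioi 0)) (nhds (∫ r in Ioo (0:ℝ) 1, g r)) := by
    have hcont : Continuous fun δ : ℝ => ∫ x in δ..(1:ℝ), g' x := by
      have h1 := intervalIntegral.continuous_primitive
        (fun a b => hg'.intervalIntegrable) (1:ℝ)
      have heq2 : (fun δ : ℝ => ∫ x in δ..(1:ℝ), g' x)
          = fun δ : ℝ => - ∫ x in (1:ℝ)..δ, g' x := by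
        funext δ; rw [intervalIntegral.integral_symm]
      rw [heq2]; exact h1.neg
    have h0 : (∫ x in (0:ℝ)..(1:ℝ), g' x) = ∫ r in Ioo (0:ℝ) 1, g r := by
      rw [intervalIntegral.integral_of_le (by norm_num : (0:ℝ) ≤ 1),
        integral_Ioc_eq_integral_Ioo, hg'_def,
        setIntegral_indicator measurableSet_Ioo]
      simp
    have heq : ∀ δ ∈ Ioo (0:ℝ) 1,
        (∫ x in δ..(1:ℝ), g' x) = ∫ r in Ioo δ 1, g r := by
      intro δ hδ
      rw [intervalIntegral.integral_of_le hδ.2.le, integral_Ioc_eq_integral_Ioo,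
        hg'_def, setIntegral_indicator measurableSet_Ioo]
      rw [Set.inter_eq_left.2 (Ioo_subset_Ioo hδ.1.le le_rfl)]
    have := (hcont.tendsto 0).mono_left (nhdsWithin_le_nhds (s := Ioi (0:ℝ)))
    rw [h0] at this
    refine this.congr' ?_
    filter_upwards [hIoo] with δ hδ using heq δ hδ
  have hE : Filter.Tendsto (fun δ : ℝ => S + (∫ r in Ioo δ 1, g r) + ∫ r in Ioi 1, f r)
      (nhdsWithin 0 (Ioi 0)) (nhds (genInt f Ω c)) := by
    have : genInt f Ω c = S + (∫ r in Ioo (0:ℝ) 1, g r) + ∫ r in Ioi 1, f r := rfl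
    rw [this]
    exact (Filter.Tendsto.add (Filter.Tendsto.add tendsto_const_nhds hF)
      tendsto_const_nhds)
  refine hE.congr' ?_
  filter_upwards [hIoo] with δ hδ using (key δ hδ).symm
end

section
/- Let f be integrable in the generalized sense on [0,∞[ with coefficient f_{−1} of r^{−1} at 0. Then for every α > 0, gen∫₀^∞ f(αu) α du = gen∫₀^∞ f(r) dr − f_{−1} ln α. In particular, the generalized integral is scaling invariant if and only if f_{−1} = 0. -/
open MeasureTheory Set Complex Real
open intervalIntegral

lemma Jlog (ε : ℝ) (hε0 : 0 < ε) (hε1 : ε ≤ 1) :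
    ∫ r in ε..1, (r:ℂ) ^ (-1 : ℂ) = ↑(-Real.log ε) := by
  have h0 : (0:ℝ) ∉ Set.uIcc ε 1 := by
    rw [Set.uIcc_of_le hε1]
    intro h; exact absurd h.1 (not_le.mpr hε0)
  rw [intervalIntegral.integral_congr (g := fun x : ℝ => ((x⁻¹ : ℝ) : ℂ))]
  · rw [intervalIntegral.integral_ofReal]
    norm_cast
    rw [show (fun x : ℝ => x⁻¹) = (fun x : ℝ => 1 / x) by funext x; rw [one_div]]
    rw [integral_one_div h0, one_div, Real.log_inv]
  · intro x hx
    have hx0 : (x:ℂ) ≠ 0 := by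
      exact_mod_cast (ne_of_mem_of_not_mem hx h0 : x ≠ 0)
    simp only [Complex.cpow_neg_one, Complex.ofReal_inv]

lemma Jpow (ε : ℝ) (hε0 : 0 < ε) (hε1 : ε ≤ 1) (μ : ℂ) (hμ : μ ≠ 0) :
    ∫ r in ε..1, (r:ℂ) ^ (μ - 1) = (1 - (ε:ℂ) ^ μ) / μ := by
  have h0 : (0:ℝ) ∉ Set.uIcc ε 1 := by
    rw [Set.uIcc_of_le hε1]
    intro h; exact absurd h.1 (not_le.mpr hε0)
  rw [integral_cpow (Or.inr ⟨by simpa [sub_eq_iff_eq_add] using hμ, h0⟩)]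
  rw [sub_add_cancel]
  push_cast
  rw [Complex.one_cpow]

lemma cpow_intervalIntegrable {a b : ℝ} (ha : 0 < a) (hb : 0 < b) (k : ℂ) :
    IntervalIntegrable (fun r : ℝ => (r : ℂ) ^ k) volume a b := by
  apply ContinuousOn.intervalIntegrable
  intro x hx
  have hx0 : x ≠ 0 := by
    simp only [Set.uIcc, Set.mem_Icc] at hx
    have : 0 < min a b := lt_min ha hb
    nlinarith [hx.1, hx.2]
  exact (continuousAt_ofReal_cpow_const x k (Or.inr hx0)).continuousWithinAt

lemma powsum_intervalIntegrable (S : Finset ℂ) (d : ℂ → ℂ) {a b : ℝ}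
    (ha : 0 < a) (hb : 0 < b) :
    IntervalIntegrable (fun r : ℝ => ∑ k ∈ S, d k * (r : ℂ) ^ k) volume a b := by
  apply ContinuousOn.intervalIntegrable
  apply continuousOn_finset_sum
  intro k _
  apply ContinuousOn.mul continuousOn_const
  intro x hx
  have hx0 : x ≠ 0 := by
    simp only [Set.uIcc, Set.mem_Icc] at hx
    have : 0 < min a b := lt_min ha hb
    nlinarith [hx.1, hx.2]
  exact (continuousAt_ofReal_cpow_const x k (Or.inr hx0)).continuousWithinAt

lemma coeff_min_zero (S : Finset ℂ) (d : ℂ → ℂ) (k₀ : ℂ) (hk₀ : k₀ ∈ S)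
    (hre : k₀.re ≤ -1) (hmin : ∀ k ∈ S, k₀.re ≤ k.re)
    (h : IntegrableOn (fun r : ℝ => ∑ k ∈ S, d k * (r : ℂ) ^ k) (Ioo 0 1)) :
    d k₀ = 0 := by
  set h₀ : ℝ → ℂ := fun r => ∑ k ∈ S, d k * (r : ℂ) ^ k with hh₀
  set C : ℝ := ∫ r in Ioo (0:ℝ) 1, ‖h₀ r‖ with hC
  have hC0 : 0 ≤ C := integral_nonneg fun r => norm_nonneg _
  set D : ℝ := ∑ k ∈ S.erase k₀, ‖d k‖ * (2 / ‖k - k₀‖) with hD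
  have hD0 : 0 ≤ D := Finset.sum_nonneg fun k _ => by positivity
  have key : ∀ ε : ℝ, 0 < ε → ε < 1 → ‖d k₀‖ * (-Real.log ε) ≤ C + D := by
    intro ε hε0 hε1
    have hε1' : ε ≤ 1 := hε1.le
    set w : ℝ → ℂ := fun r => (r : ℂ) ^ (-1 - k₀) with hw
    set I : ℂ := ∫ r in ε..1, h₀ r * w r with hI
    have hcont : ContinuousOn h₀ (Set.Icc ε 1) := by
      apply continuousOn_finset_sum
      intro k _
      apply ContinuousOn.mul continuousOn_const
      intro x hx
      exact (continuousAt_ofReal_cpow_const x k (Or.inr (by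
        have := hx.1; intro h0; rw [h0] at this; linarith))).continuousWithinAt
    -- (a) bound ‖I‖ ≤ C
    have hIbound : ‖I‖ ≤ C := by
      have h1 : ‖I‖ ≤ ∫ r in ε..1, ‖h₀ r * w r‖ :=
        intervalIntegral.norm_integral_le_integral_norm hε1'
      have h2 : (∫ r in ε..1, ‖h₀ r * w r‖) ≤ ∫ r in ε..1, ‖h₀ r‖ := by
        apply intervalIntegral.integral_mono_on hε1'
        · apply ContinuousOn.intervalIntegrable_of_Icc hε1'
          apply ContinuousOn.norm
          apply ContinuousOn.mul hcont
          intro x hx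
          exact (continuousAt_ofReal_cpow_const x _ (Or.inr (by
            have := hx.1; intro h0; rw [h0] at this; linarith))).continuousWithinAt
        · exact (hcont.norm).intervalIntegrable_of_Icc hε1'
        · intro x hx
          rw [norm_mul]
          have hx0 : 0 < x := lt_of_lt_of_le hε0 hx.1
          have hwx : ‖w x‖ ≤ 1 := by
            rw [hw]
            show ‖(x:ℂ) ^ (-1 - k₀)‖ ≤ 1
            rw [Complex.norm_cpow_eq_rpow_re_of_pos hx0]
            apply Real.rpow_le_one hx0.le hx.2
            simp only [Complex.sub_re, Complex.neg_re, Complex.one_re]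
            linarith
          calc ‖h₀ x‖ * ‖w x‖ ≤ ‖h₀ x‖ * 1 :=
                mul_le_mul_of_nonneg_left hwx (norm_nonneg _)
            _ = ‖h₀ x‖ := mul_one _
      have h3 : (∫ r in ε..1, ‖h₀ r‖) ≤ C := by
        rw [intervalIntegral.integral_of_le hε1', MeasureTheory.integral_Ioc_eq_integral_Ioo]
        apply setIntegral_mono_set h.norm
        · filter_upwards with x using norm_nonneg _
        · apply Filter.Eventually.of_forall
          intro x hx
          exact ⟨lt_of_lt_of_le hε0 hx.1.le, hx.2⟩
      linarith
    -- (b) expansion of I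
    have hexp : I = d k₀ * ↑(-Real.log ε)
        + ∑ k ∈ S.erase k₀, d k * ((1 - (ε:ℂ) ^ (k - k₀)) / (k - k₀)) := by
      rw [hI, intervalIntegral.integral_congr
        (g := fun r : ℝ => ∑ k ∈ S, d k * (r : ℂ) ^ (k - k₀ - 1))]
      swap
      · intro x hx
        have hx0 : (x:ℂ) ≠ 0 := by
          rw [Set.uIcc_of_le hε1'] at hx
          have : x ≠ 0 := ne_of_gt (lt_of_lt_of_le hε0 hx.1)
          exact_mod_cast this
        simp only [hh₀, hw]
        rw [Finset.sum_mul]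
        apply Finset.sum_congr rfl
        intro k _
        rw [mul_assoc, ← Complex.cpow_add _ _ hx0]
        ring_nf
      rw [intervalIntegral.integral_finset_sum (fun k _ =>
        ((cpow_intervalIntegrable hε0 one_pos (k - k₀ - 1)).const_mul (d k)))]
      rw [← Finset.add_sum_erase S _ hk₀]
      congr 1
      · rw [intervalIntegral.integral_const_mul, show k₀ - k₀ - 1 = (-1 : ℂ) by ring,
          Jlog ε hε0 hε1']
      · apply Finset.sum_congr rfl
        intro k hk
        rw [intervalIntegral.integral_const_mul,
          Jpow ε hε0 hε1' (k - k₀) (sub_ne_zero.mpr (Finset.ne_of_mem_erase hk))]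
    -- (c) conclude the bound
    have hlogpos : 0 ≤ -Real.log ε := by
      have := Real.log_nonpos hε0.le hε1'
      linarith
    have hterm : ∀ k ∈ S.erase k₀,
        ‖d k * ((1 - (ε:ℂ) ^ (k - k₀)) / (k - k₀))‖ ≤ ‖d k‖ * (2 / ‖k - k₀‖) := by
      intro k hk
      have hμ0 : (0:ℝ) < ‖k - k₀‖ :=
        norm_pos_iff.mpr (sub_ne_zero.mpr (Finset.ne_of_mem_erase hk))
      have hnum : ‖(1:ℂ) - (ε:ℂ) ^ (k - k₀)‖ ≤ 2 := by
        calc ‖(1:ℂ) - (ε:ℂ) ^ (k - k₀)‖ ≤ ‖(1:ℂ)‖ + ‖(ε:ℂ) ^ (k - k₀)‖ := norm_sub_le _ _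
          _ ≤ 1 + 1 := by
              rw [norm_one]
              gcongr
              rw [Complex.norm_cpow_eq_rpow_re_of_pos hε0]
              apply Real.rpow_le_one hε0.le hε1'
              simp only [Complex.sub_re]
              linarith [hmin k (Finset.mem_of_mem_erase hk)]
          _ = 2 := by norm_num
      rw [norm_mul, norm_div]
      gcongr
    calc ‖d k₀‖ * (-Real.log ε) = ‖d k₀ * ↑(-Real.log ε)‖ := by
          rw [norm_mul, Complex.norm_real, Real.norm_eq_abs, _root_.abs_of_nonneg hlogpos]
      _ = ‖I - ∑ k ∈ S.erase k₀, d k * ((1 - (ε:ℂ) ^ (k - k₀)) / (k - k₀))‖ := by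
          rw [hexp, add_sub_cancel_right]
      _ ≤ ‖I‖ + ‖∑ k ∈ S.erase k₀, d k * ((1 - (ε:ℂ) ^ (k - k₀)) / (k - k₀))‖ :=
          norm_sub_le _ _
      _ ≤ C + D := by
          apply add_le_add hIbound
          calc ‖∑ k ∈ S.erase k₀, d k * ((1 - (ε:ℂ) ^ (k - k₀)) / (k - k₀))‖
              ≤ ∑ k ∈ S.erase k₀, ‖d k * ((1 - (ε:ℂ) ^ (k - k₀)) / (k - k₀))‖ :=
                norm_sum_le _ _
            _ ≤ D := Finset.sum_le_sum hterm
  -- conclude d k₀ = 0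
  by_contra hd
  have hdn : (0:ℝ) < ‖d k₀‖ := norm_pos_iff.mpr hd
  set ε : ℝ := Real.exp (-(C + D + 1) / ‖d k₀‖) with hε
  have hε0 : 0 < ε := Real.exp_pos _
  have hε1 : ε < 1 := by
    rw [hε, Real.exp_lt_one_iff]
    apply div_neg_of_neg_of_pos _ hdn
    linarith
  have := key ε hε0 hε1
  rw [hε, Real.log_exp] at this
  rw [neg_div, neg_neg] at this
  rw [mul_div_cancel₀ _ (ne_of_gt hdn)] at this
  linarith

lemma bad_coeffs_zero : ∀ n : ℕ, ∀ S : Finset ℂ, S.card ≤ n → (∀ k ∈ S, k.re ≤ -1) →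
    ∀ d : ℂ → ℂ, IntegrableOn (fun r : ℝ => ∑ k ∈ S, d k * (r:ℂ)^k) (Ioo 0 1) →
    ∀ k ∈ S, d k = 0 := by
  intro n
  induction n with
  | zero =>
    intro S hcard _ d _ k hk
    rw [Nat.le_zero, Finset.card_eq_zero] at hcard
    subst hcard
    exact absurd hk (Finset.notMem_empty k)
  | succ n ih =>
    intro S hcard hre d hint k hk
    obtain ⟨k₀, hk₀S, hk₀min⟩ := S.exists_min_image (fun k => k.re) ⟨k, hk⟩
    have hd0 : d k₀ = 0 := coeff_min_zero S d k₀ hk₀S (hre _ hk₀S) hk₀min hint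
    by_cases hkk : k = k₀
    · rw [hkk]; exact hd0
    · have hfun : (fun r : ℝ => ∑ j ∈ S.erase k₀, d j * (r:ℂ)^j)
          = fun r : ℝ => ∑ j ∈ S, d j * (r:ℂ)^j := by
        funext r
        exact Finset.sum_erase S (by rw [hd0, zero_mul])
      apply ih (S.erase k₀) ?_ (fun j hj => hre j (Finset.mem_of_mem_erase hj)) d
        (by rw [hfun]; exact hint) k (Finset.mem_erase.mpr ⟨hkk, hk⟩)
      have h1 : 1 ≤ S.card := Finset.card_pos.mpr ⟨k, hk⟩
      rw [Finset.card_erase_of_mem hk₀S]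
      omega

lemma cpow_integral_Ioo (k : ℂ) (hk : -1 < k.re) :
    ∫ r in Ioo (0:ℝ) 1, (r:ℂ)^k = 1 / (k + 1) := by
  have hk1 : k + 1 ≠ 0 := by
    intro h
    have : (k + 1).re = 0 := by rw [h]; simp
    simp only [Complex.add_re, Complex.one_re] at this
    linarith
  rw [← MeasureTheory.integral_Ioc_eq_integral_Ioo,
    ← intervalIntegral.integral_of_le zero_le_one,
    integral_cpow (Or.inl hk)]
  push_cast
  rw [Complex.one_cpow, Complex.zero_cpow hk1, sub_zero]

lemma powsum_integral (S : Finset ℂ) (d : ℂ → ℂ)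
    (h : IntegrableOn (fun r : ℝ => ∑ k ∈ S, d k * (r:ℂ)^k) (Ioo 0 1)) :
    (∫ r in Ioo (0:ℝ) 1, ∑ k ∈ S, d k * (r:ℂ)^k)
      = ∑ k ∈ S, if k = -1 then 0 else d k / (k + 1) := by
  classical
  have hgoodint : ∀ k ∈ S.filter (fun k => -1 < k.re),
      IntegrableOn (fun r : ℝ => d k * (r:ℂ)^k) (Ioo 0 1) volume := by
    intro k hkG
    have hkre : -1 < k.re := (Finset.mem_filter.mp hkG).2
    exact (intervalIntegrable_iff_integrableOn_Ioo_of_le zero_le_one).mp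
      ((intervalIntegrable_cpow' hkre).const_mul (d k))
  have hGint : IntegrableOn
      (fun r : ℝ => ∑ k ∈ S.filter (fun k => -1 < k.re), d k * (r:ℂ)^k) (Ioo 0 1) :=
    integrable_finset_sum _ hgoodint
  have hBint : IntegrableOn
      (fun r : ℝ => ∑ k ∈ S.filter (fun k => ¬(-1 < k.re)), d k * (r:ℂ)^k) (Ioo 0 1) := by
    apply MeasureTheory.IntegrableOn.congr_fun (h.sub hGint) ?_ measurableSet_Ioo
    intro r _
    simp only [Pi.sub_apply]
    rw [← Finset.sum_filter_add_sum_filter_not S (fun k => -1 < k.re)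
      (fun k => d k * (r:ℂ)^k)]
    ring
  have hB0 : ∀ k ∈ S.filter (fun k => ¬(-1 < k.re)), d k = 0 := by
    apply bad_coeffs_zero _ _ le_rfl ?_ d hBint
    intro j hj
    have := (Finset.mem_filter.mp hj).2
    linarith [not_lt.mp this]
  have hfun : (fun r : ℝ => ∑ k ∈ S, d k * (r:ℂ)^k)
      = fun r : ℝ => ∑ k ∈ S.filter (fun k => -1 < k.re), d k * (r:ℂ)^k := by
    funext r
    have hzero : ∑ k ∈ S.filter (fun k => ¬(-1 < k.re)), d k * (r:ℂ)^k = 0 :=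
      Finset.sum_eq_zero (fun j hj => by rw [hB0 j hj, zero_mul])
    conv_lhs => rw [← Finset.sum_filter_add_sum_filter_not S (fun k => -1 < k.re)
      (fun k => d k * (r:ℂ)^k)]
    rw [hzero, add_zero]
  rw [hfun, MeasureTheory.integral_finset_sum _ hgoodint]
  have hstep : (∑ k ∈ S.filter (fun k => -1 < k.re), ∫ r in Ioo (0:ℝ) 1, d k * (r:ℂ)^k)
      = ∑ k ∈ S.filter (fun k => -1 < k.re), d k / (k+1) := by
    apply Finset.sum_congr rfl
    intro k hk
    rw [MeasureTheory.integral_const_mul,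
      cpow_integral_Ioo k (Finset.mem_filter.mp hk).2, mul_one_div]
  rw [hstep, Finset.sum_filter]
  apply Finset.sum_congr rfl
  intro k hk
  by_cases hp : -1 < k.re
  · rw [if_pos hp, if_neg (by intro hk1; rw [hk1] at hp; simp at hp)]
  · rw [if_neg hp]
    by_cases hk1 : k = -1
    · rw [if_pos hk1]
    · rw [if_neg hk1, hB0 k (Finset.mem_filter.mpr ⟨hk, hp⟩), zero_div]

lemma genInt_congr (g : ℝ → ℂ) (Ω : Finset ℂ) (c : ℂ → ℂ) (Ω' : Finset ℂ) (c' : ℂ → ℂ)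
    (h : GenIntegrable g Ω c) (h' : GenIntegrable g Ω' c') :
    genInt g Ω c = genInt g Ω' c' := by
  classical
  set T : Finset ℂ := Ω ∪ Ω' with hT
  set d : ℂ → ℂ := fun k => (if k ∈ Ω then c k else 0) - (if k ∈ Ω' then c' k else 0) with hd
  have hsum : ∀ r : ℝ, (∑ k ∈ T, d k * (r:ℂ)^k)
      = (∑ k ∈ Ω, c k * (r:ℂ)^k) - (∑ k ∈ Ω', c' k * (r:ℂ)^k) := by
    intro r
    have e1 : ∀ k : ℂ, d k * (r:ℂ)^k
        = (if k ∈ Ω then c k * (r:ℂ)^k else 0) - (if k ∈ Ω' then c' k * (r:ℂ)^k else 0) := by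
      intro k
      rw [hd]
      by_cases h1 : k ∈ Ω <;> by_cases h2 : k ∈ Ω' <;> simp [h1, h2] <;> ring
    rw [Finset.sum_congr rfl (fun k _ => e1 k), Finset.sum_sub_distrib,
      Finset.sum_ite_mem, Finset.sum_ite_mem, hT,
      Finset.union_inter_cancel_left, Finset.union_inter_cancel_right]
  have hint : IntegrableOn (fun r : ℝ => ∑ k ∈ T, d k * (r:ℂ)^k) (Ioo 0 1) := by
    apply MeasureTheory.IntegrableOn.congr_fun (h'.2.sub h.2) ?_ measurableSet_Ioo
    intro r _
    simp only [Pi.sub_apply]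
    rw [hsum r]
    ring
  have hval := powsum_integral T d hint
  have hcoef : (∑ k ∈ T, if k = -1 then 0 else d k / (k+1))
      = (∑ k ∈ Ω, if k = -1 then 0 else c k / (k+1))
        - (∑ k ∈ Ω', if k = -1 then 0 else c' k / (k+1)) := by
    have e1 : ∀ k : ℂ, (if k = -1 then 0 else d k / (k+1))
        = (if k ∈ Ω then (if k = -1 then 0 else c k / (k+1)) else 0)
          - (if k ∈ Ω' then (if k = -1 then 0 else c' k / (k+1)) else 0) := by
      intro k
      rw [hd]
      by_cases h0 : k = -1 <;> by_cases h1 : k ∈ Ω <;> by_cases h2 : k ∈ Ω' <;>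
        simp [h0, h1, h2, sub_div, neg_div]
    rw [Finset.sum_congr rfl (fun k _ => e1 k), Finset.sum_sub_distrib,
      Finset.sum_ite_mem, Finset.sum_ite_mem, hT,
      Finset.union_inter_cancel_left, Finset.union_inter_cancel_right]
  have hsub : (∫ r in Ioo (0:ℝ) 1, (g r - ∑ k ∈ Ω, c k * (r:ℂ)^k))
      - (∫ r in Ioo (0:ℝ) 1, (g r - ∑ k ∈ Ω', c' k * (r:ℂ)^k))
      = - ∫ r in Ioo (0:ℝ) 1, ∑ k ∈ T, d k * (r:ℂ)^k := by
    rw [← MeasureTheory.integral_sub h.2 h'.2, ← MeasureTheory.integral_neg]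
    congr 1
    funext r
    rw [hsum r]
    ring
  have hfin : (∫ r in Ioo (0:ℝ) 1, (g r - ∑ k ∈ Ω, c k * (r:ℂ)^k))
      - (∫ r in Ioo (0:ℝ) 1, (g r - ∑ k ∈ Ω', c' k * (r:ℂ)^k))
      = -((∑ k ∈ Ω, if k = -1 then 0 else c k / (k+1))
        - (∑ k ∈ Ω', if k = -1 then 0 else c' k / (k+1))) := by
    rw [hsub, hval, hcoef]
  unfold genInt
  linear_combination hfin

lemma integral_Ioi_split {f : ℝ → ℂ} {a b : ℝ} (ha : IntegrableOn f (Ioi a))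
    (hb : IntegrableOn f (Ioi b)) (hab : IntervalIntegrable f volume a b) :
    ∫ x in Ioi a, f x = (∫ x in a..b, f x) + ∫ x in Ioi b, f x := by
  rcases le_total a b with h | h
  · rw [intervalIntegral.integral_of_le h,
      ← MeasureTheory.setIntegral_union Set.Ioc_disjoint_Ioi_same measurableSet_Ioi
        ((intervalIntegrable_iff_integrableOn_Ioc_of_le h).mp hab) hb,
      Set.Ioc_union_Ioi_eq_Ioi h]
  · have := MeasureTheory.setIntegral_union (f := f) (μ := volume)
      Set.Ioc_disjoint_Ioi_same measurableSet_Ioi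
      ((intervalIntegrable_iff_integrableOn_Ioc_of_le h).mp hab.symm) ha
    rw [Set.Ioc_union_Ioi_eq_Ioi h] at this
    rw [intervalIntegral.integral_symm, intervalIntegral.integral_of_le h, this]
    ring

lemma Jlog2 (α : ℝ) (hα : 0 < α) :
    ∫ r in (1:ℝ)..α, (r:ℂ) ^ (-1 : ℂ) = ↑(Real.log α) := by
  have h0 : (0:ℝ) ∉ Set.uIcc 1 α := by
    intro h
    rcases h with ⟨h1, _⟩
    have : (0:ℝ) < min 1 α := lt_min one_pos hα
    linarith
  rw [intervalIntegral.integral_congr (g := fun x : ℝ => ((x⁻¹ : ℝ) : ℂ))]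
  · rw [intervalIntegral.integral_ofReal]
    norm_cast
    rw [show (fun x : ℝ => x⁻¹) = (fun x : ℝ => 1 / x) by funext x; rw [one_div]]
    rw [integral_one_div h0, div_one]
  · intro x hx
    have hx0 : (x:ℂ) ≠ 0 := by
      exact_mod_cast (ne_of_mem_of_not_mem hx h0 : x ≠ 0)
    simp only [Complex.cpow_neg_one, Complex.ofReal_inv]

theorem genInt_scaling (f : ℝ → ℂ) (Ω : Finset ℂ) (c : ℂ → ℂ)
    (α : ℝ) (hα : 0 < α) (hf : GenIntegrable f Ω c)
    (Ω' : Finset ℂ) (c' : ℂ → ℂ)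
    (hg : GenIntegrable (fun u => (α : ℂ) * f (α * u)) Ω' c') :
    genInt (fun u => (α : ℂ) * f (α * u)) Ω' c'
      = genInt f Ω c - (if (-1 : ℂ) ∈ Ω then c (-1) else 0) * Real.log α := by
  classical
  have hαC : (α:ℂ) ≠ 0 := by exact_mod_cast (ne_of_gt hα)
  set F : ℝ → ℂ := fun r => f r - ∑ k ∈ Ω, c k * (r:ℂ)^k with hF
  set c'' : ℂ → ℂ := fun k => c k * (α:ℂ)^(k+1) with hc''
  -- interval integrability of the power sum on positive intervals
  have hPII : ∀ a b : ℝ, 0 < a → 0 < b →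
      IntervalIntegrable (fun r : ℝ => ∑ k ∈ Ω, c k * (r:ℂ)^k) volume a b :=
    fun a b ha hb => powsum_intervalIntegrable Ω c ha hb
  -- f is interval integrable on [1, α]
  have hfII1α : IntervalIntegrable f volume 1 α := by
    rcases le_total 1 α with h | h
    · exact (intervalIntegrable_iff_integrableOn_Ioo_of_le h).mpr
        (hf.1.mono_set Set.Ioo_subset_Ioi_self)
    · apply IntervalIntegrable.symm
      apply (intervalIntegrable_iff_integrableOn_Ioo_of_le h).mpr
      have hsub : Ioo α 1 ⊆ Ioo 0 1 := Set.Ioo_subset_Ioo_left hα.le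
      have hPint : IntegrableOn (fun r : ℝ => ∑ k ∈ Ω, c k * (r:ℂ)^k) (Ioo α 1) :=
        (intervalIntegrable_iff_integrableOn_Ioo_of_le h).mp (hPII α 1 hα one_pos)
      apply MeasureTheory.IntegrableOn.congr_fun
        ((hf.2.mono_set hsub).add hPint) ?_ measurableSet_Ioo
      intro r _
      simp only [hF, Pi.add_apply]
      ring
  have hFII1α : IntervalIntegrable F volume 1 α := hfII1α.sub (hPII 1 α one_pos hα)
  have hFII01 : IntervalIntegrable F volume 0 1 :=
    (intervalIntegrable_iff_integrableOn_Ioo_of_le zero_le_one).mpr hf.2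
  -- f integrable on Ioi α
  have hfIoiα : IntegrableOn f (Ioi α) := by
    rcases le_total 1 α with h | h
    · exact hf.1.mono_set (Set.Ioi_subset_Ioi h)
    · rw [← Set.Ioc_union_Ioi_eq_Ioi h]
      apply MeasureTheory.IntegrableOn.union ?_ hf.1
      exact (intervalIntegrable_iff_integrableOn_Ioc_of_le h).mp hfII1α.symm
  -- F integrable on Ioo 0 α
  have hFIoo0α : IntegrableOn F (Ioo 0 α) := by
    rcases le_total α 1 with h | h
    · exact hf.2.mono_set (Set.Ioo_subset_Ioo_right h)
    · have hIco : IntegrableOn F (Ico 1 α) := by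
        rw [integrableOn_Ico_iff_integrableOn_Ioo]
        have h1 : IntegrableOn f (Ioo 1 α) := hf.1.mono_set Set.Ioo_subset_Ioi_self
        have h2 : IntegrableOn (fun r : ℝ => ∑ k ∈ Ω, c k * (r:ℂ)^k) (Ioo 1 α) :=
          (intervalIntegrable_iff_integrableOn_Ioo_of_le h).mp (hPII 1 α one_pos hα)
        apply MeasureTheory.IntegrableOn.congr_fun (h1.sub h2) ?_ measurableSet_Ioo
        intro r _
        simp only [hF, Pi.sub_apply]
      apply (hf.2.union hIco).mono_set
      intro x hx
      by_cases hx1 : x < 1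
      · exact Or.inl ⟨hx.1, hx1⟩
      · exact Or.inr ⟨not_lt.mp hx1, hx.2⟩
  -- pointwise identity for the scaled remainder
  have hptw : ∀ u : ℝ, 0 < u →
      (α:ℂ) * f (α * u) - ∑ k ∈ Ω, c'' k * (u:ℂ)^k = (α:ℂ) * F (α * u) := by
    intro u hu
    have hsum : (∑ k ∈ Ω, c'' k * (u:ℂ)^k)
        = (α:ℂ) * ∑ k ∈ Ω, c k * ((α * u : ℝ):ℂ)^k := by
      rw [Finset.mul_sum]
      apply Finset.sum_congr rfl
      intro k _
      rw [hc'']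
      push_cast
      rw [Complex.mul_cpow_ofReal_nonneg hα.le hu.le, Complex.cpow_add _ _ hαC,
        Complex.cpow_one]
      ring
    rw [hF, hsum]
    ring
  -- integrability of the scaled remainder
  have hscaledInt : IntegrableOn
      (fun u : ℝ => (α:ℂ) * F (α * u)) (Ioo 0 1) := by
    have h1 : IntervalIntegrable F volume 0 α :=
      (intervalIntegrable_iff_integrableOn_Ioo_of_le hα.le).mpr hFIoo0α
    have h2 := (h1.comp_mul_left (c := α)).const_mul ((α:ℂ))
    rw [zero_div, div_self (ne_of_gt hα)] at h2
    exact (intervalIntegrable_iff_integrableOn_Ioo_of_le zero_le_one).mp h2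
  have hGI'' : GenIntegrable (fun u => (α : ℂ) * f (α * u)) Ω c'' := by
    refine ⟨hg.1, ?_⟩
    apply MeasureTheory.IntegrableOn.congr_fun hscaledInt ?_ measurableSet_Ioo
    intro u hu
    exact (hptw u hu.1).symm
  -- value computation on Ioi 1
  have hIoi : (∫ u in Ioi (1:ℝ), (α:ℂ) * f (α * u)) = ∫ r in Ioi α, f r := by
    have e1 : (fun u : ℝ => (α:ℂ) * f (α * u)) = fun u : ℝ => α • f (α * u) := by
      funext u
      rw [Complex.real_smul]
    rw [e1, MeasureTheory.integral_smul,
      MeasureTheory.integral_comp_mul_left_Ioi f 1 hα, mul_one, smul_smul,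
      mul_inv_cancel₀ (ne_of_gt hα), one_smul]
  -- value computation on Ioo 0 1
  have hIoo : (∫ u in Ioo (0:ℝ) 1, ((α:ℂ) * f (α * u) - ∑ k ∈ Ω, c'' k * (u:ℂ)^k))
      = ∫ r in (0:ℝ)..α, F r := by
    rw [MeasureTheory.setIntegral_congr_fun measurableSet_Ioo
      (fun u hu => hptw u hu.1)]
    rw [← MeasureTheory.integral_Ioc_eq_integral_Ioo,
      ← intervalIntegral.integral_of_le zero_le_one]
    have e1 : (fun u : ℝ => (α:ℂ) * F (α * u)) = fun u : ℝ => α • F (α * u) := by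
      funext u
      rw [Complex.real_smul]
    rw [e1, intervalIntegral.integral_smul,
      intervalIntegral.smul_integral_comp_mul_left F α, mul_zero, mul_one]
  -- splitting 0..α
  have h0α : (∫ r in (0:ℝ)..α, F r)
      = (∫ r in Ioo (0:ℝ) 1, F r) + ∫ r in (1:ℝ)..α, F r := by
    rw [← intervalIntegral.integral_add_adjacent_intervals hFII01 hFII1α]
    congr 1
    rw [intervalIntegral.integral_of_le zero_le_one,
      MeasureTheory.integral_Ioc_eq_integral_Ioo]
  -- splitting Ioi α
  have hsplit : (∫ r in Ioi α, f r)
      = (∫ r in Ioi (1:ℝ), f r) - ∫ r in (1:ℝ)..α, f r := by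
    rw [integral_Ioi_split hf.1 hfIoiα hfII1α]
    ring
  -- interval integral of F on 1..α
  have hFint1α : (∫ r in (1:ℝ)..α, F r)
      = (∫ r in (1:ℝ)..α, f r) - ∫ r in (1:ℝ)..α, ∑ k ∈ Ω, c k * (r:ℂ)^k := by
    rw [← intervalIntegral.integral_sub hfII1α (hPII 1 α one_pos hα)]
  -- the power sum integral on 1..α
  have hJ : (∫ r in (1:ℝ)..α, ∑ k ∈ Ω, c k * (r:ℂ)^k)
      = ((∑ k ∈ Ω, if k = -1 then 0 else c'' k / (k+1))
        - (∑ k ∈ Ω, if k = -1 then 0 else c k / (k+1)))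
        + (if (-1:ℂ) ∈ Ω then c (-1) * ↑(Real.log α) else 0) := by
    rw [intervalIntegral.integral_finset_sum (fun k _ =>
      (cpow_intervalIntegrable one_pos hα k).const_mul (c k))]
    have e1 : ∀ k ∈ Ω, (∫ r in (1:ℝ)..α, c k * (r:ℂ)^k)
        = ((if k = -1 then 0 else c'' k / (k+1))
          - (if k = -1 then 0 else c k / (k+1)))
          + (if k = -1 then c k * ↑(Real.log α) else 0) := by
      intro k _
      rw [intervalIntegral.integral_const_mul]
      by_cases hk : k = -1
      · subst hk
        rw [Jlog2 α hα]
        simp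
      · have h0 : (0:ℝ) ∉ Set.uIcc 1 α := by
          intro h
          rcases h with ⟨h1, _⟩
          have : (0:ℝ) < min 1 α := lt_min one_pos hα
          linarith
        rw [integral_cpow (Or.inr ⟨hk, h0⟩)]
        rw [if_neg hk, if_neg hk, if_neg hk, hc'']
        push_cast
        rw [Complex.one_cpow]
        ring
    rw [Finset.sum_congr rfl e1, Finset.sum_add_distrib, Finset.sum_sub_distrib,
      Finset.sum_ite_eq' Ω (-1 : ℂ) (fun k => c k * ↑(Real.log α))]
  -- put everything together
  have hmain : genInt (fun u => (α : ℂ) * f (α * u)) Ω c''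
      = genInt f Ω c - (if (-1 : ℂ) ∈ Ω then c (-1) else 0) * Real.log α := by
    unfold genInt
    rw [hIoi, hsplit, hIoo, h0α, hFint1α, hJ]
    have hite : (if (-1:ℂ) ∈ Ω then c (-1) * ↑(Real.log α) else 0)
        = (if (-1:ℂ) ∈ Ω then c (-1) else 0) * ↑(Real.log α) := by
      by_cases hm : (-1:ℂ) ∈ Ω
      · rw [if_pos hm, if_pos hm]
      · rw [if_neg hm, if_neg hm, zero_mul]
    rw [hite]
    have e2 : (∫ r in Ioo (0:ℝ) 1, F r)
        = ∫ r in Ioo (0:ℝ) 1, (f r - ∑ k ∈ Ω, c k * (r:ℂ)^k) := rfl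
    rw [e2]
    ring
  rw [genInt_congr (fun u => (α : ℂ) * f (α * u)) Ω' c' Ω c'' hg hGI'', hmain]
end

section
/- Let f be integrable in the generalized sense on [0,∞[. Then for every α > 0, the generalized integral is invariant under the power substitution r = u^α: gen∫₀^∞ f(r) dr = gen∫₀^∞ f(u^α) α u^{α−1} du. -/
open MeasureTheory Set Complex Real

section Aux

open Filter intervalIntegral
open scoped Interval

lemma tendsto_inv_ofReal : Filter.Tendsto (fun t : ℝ => ((t : ℂ))⁻¹) atTop (nhds 0) := by
  have : Filter.Tendsto (fun t : ℝ => ((t⁻¹ : ℝ) : ℂ)) atTop (nhds ((0:ℝ):ℂ)) :=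
    (Complex.continuous_ofReal.tendsto _).comp tendsto_inv_atTop_zero
  simpa using this

lemma expsum_tendsto (S : Finset ℂ) :
    ∀ (a : ℂ → ℂ) (b c L : ℂ), (∀ μ ∈ S, μ ≠ -1) →
    Filter.Tendsto (fun t : ℝ =>
      (∑ μ ∈ S, a μ * Complex.exp (-(μ + 1) * t)) + b * t + c) atTop (nhds L) →
    b = 0 ∧ c = L := by
  induction S using Finset.induction_on with
  | empty =>
    intro a b c L _ h
    simp only [Finset.sum_empty, zero_add] at h
    have hb : b = 0 := by
      have h1 : Filter.Tendsto (fun t : ℝ => (b * t + c) * ((t:ℂ))⁻¹) atTop (nhds (L * 0)) :=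
        h.mul tendsto_inv_ofReal
      have h2 : Filter.Tendsto (fun t : ℝ => (b * t + c) * ((t:ℂ))⁻¹) atTop (nhds b) := by
        have h3 : Filter.Tendsto (fun t : ℝ => b + c * ((t:ℂ))⁻¹) atTop (nhds (b + c * 0)) :=
          tendsto_const_nhds.add (tendsto_const_nhds.mul tendsto_inv_ofReal)
        rw [mul_zero, add_zero] at h3
        apply h3.congr'
        filter_upwards [eventually_ge_atTop (1:ℝ)] with t ht
        have ht0 : (t:ℂ) ≠ 0 := by
          simp only [ne_eq, Complex.ofReal_eq_zero]
          linarith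
        field_simp
      have := tendsto_nhds_unique h2 h1
      simpa using this
    subst hb
    refine ⟨rfl, ?_⟩
    simp only [zero_mul, zero_add] at h
    exact tendsto_nhds_unique tendsto_const_nhds h
  | @insert μ₀ S' hμ₀ ih =>
    intro a b c L hS h
    have hμ₀m1 : μ₀ ≠ -1 := hS μ₀ (Finset.mem_insert_self _ _)
    set lam : ℂ := -(μ₀ + 1) with hlam
    have hlam0 : lam ≠ 0 := by
      simp only [hlam, ne_eq, neg_eq_zero]
      intro hc
      exact hμ₀m1 (by linear_combination hc)
    set h0 : ℝ := Real.pi / ‖lam‖ with hh0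
    have hpos : 0 < h0 := div_pos Real.pi_pos (norm_pos_iff.mpr hlam0)
    set E : ℂ := Complex.exp (lam * h0) with hE
    have hE1 : E ≠ 1 := by
      rw [hE, Ne, Complex.exp_eq_one_iff]
      rintro ⟨n, hn⟩
      have habs : ‖lam * (h0 : ℂ)‖ = Real.pi := by
        rw [norm_mul, Complex.norm_real, Real.norm_eq_abs, abs_of_pos hpos, hh0]
        rw [mul_div_cancel₀ _ (norm_ne_zero_iff.mpr hlam0)]
      rw [hn] at habs
      have : ‖(n : ℂ) * (2 * Real.pi * Complex.I)‖ = |(n : ℝ)| * (2 * Real.pi) := by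
        simp [abs_of_pos Real.pi_pos, mul_assoc]
      rw [this] at habs
      rcases eq_or_ne n 0 with h0' | h0'
      · rw [h0'] at habs; simp at habs; exact Real.pi_ne_zero habs.symm
      · have : (1:ℝ) ≤ |(n:ℝ)| := by
          rw [← Int.cast_abs]
          exact_mod_cast Int.one_le_abs h0'
        nlinarith [Real.pi_pos]
    have h1E : (1:ℂ) - E ≠ 0 := sub_ne_zero.mpr (Ne.symm hE1)
    set F : ℝ → ℂ := fun t =>
      (∑ μ ∈ insert μ₀ S', a μ * Complex.exp (-(μ + 1) * t)) + b * t + c with hF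
    have hFsh : Filter.Tendsto (fun t : ℝ => F (t + h0)) atTop (nhds L) :=
      h.comp (tendsto_atTop_add_const_right atTop h0 tendsto_id)
    have hG : Filter.Tendsto (fun t : ℝ => (F (t + h0) - E * F t) / (1 - E)) atTop (nhds L) := by
      have := (hFsh.sub (h.const_mul E)).div_const (1 - E)
      have hLeq : (L - E * L) / (1 - E) = L := by field_simp
      rwa [hLeq] at this
    set a' : ℂ → ℂ := fun μ => a μ * (Complex.exp (-(μ + 1) * h0) - E) / (1 - E) with ha'
    set c' : ℂ := c + b * h0 / (1 - E) with hc'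
    have key : ∀ t : ℝ,
        (∑ μ ∈ S', a' μ * Complex.exp (-(μ + 1) * t)) + b * t + c'
          = (F (t + h0) - E * F t) / (1 - E) := by
      intro t
      have hsum : (∑ μ ∈ S', a' μ * Complex.exp (-(μ + 1) * t))
          = ((∑ μ ∈ S', a μ * Complex.exp (-(μ + 1) * ((t : ℂ) + (h0 : ℂ))))
            - E * ∑ μ ∈ S', a μ * Complex.exp (-(μ + 1) * t)) / (1 - E) := by
        rw [Finset.mul_sum, ← Finset.sum_sub_distrib, Finset.sum_div]
        apply Finset.sum_congr rfl
        intro μ _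
        rw [mul_add, Complex.exp_add, ha']
        field_simp
      have hins : ∀ s : ℂ, (∑ μ ∈ insert μ₀ S', a μ * Complex.exp (-(μ + 1) * s))
          = a μ₀ * Complex.exp (-(μ₀ + 1) * s) + ∑ μ ∈ S', a μ * Complex.exp (-(μ + 1) * s) :=
        fun s => Finset.sum_insert hμ₀
      have hexp0 : Complex.exp (-(μ₀ + 1) * ((t : ℂ) + (h0 : ℂ)))
          = Complex.exp (-(μ₀ + 1) * t) * E := by
        rw [mul_add, Complex.exp_add, hE, hlam]
      rw [hF]
      simp only [hins, Complex.ofReal_add]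
      rw [hexp0, hsum, hc']
      generalize (∑ μ ∈ S', a μ * Complex.exp (-(μ + 1) * ((t : ℂ) + (h0 : ℂ)))) = X
      generalize (∑ μ ∈ S', a μ * Complex.exp (-(μ + 1) * (t : ℂ))) = Y
      field_simp
      ring
    have hG2 : Filter.Tendsto (fun t : ℝ =>
        (∑ μ ∈ S', a' μ * Complex.exp (-(μ + 1) * t)) + b * t + c') atTop (nhds L) := by
      apply hG.congr
      intro t
      exact (key t).symm
    obtain ⟨hb, hcL⟩ := ih a' b c' L (fun μ hμ => hS μ (Finset.mem_insert_of_mem hμ)) hG2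
    refine ⟨hb, ?_⟩
    rw [hc', hb] at hcL
    simpa using hcL

lemma integral_powsum (T : Finset ℂ) (e : ℂ → ℂ)
    (hInt : IntegrableOn (fun u : ℝ => ∑ μ ∈ T, e μ * (u:ℂ) ^ μ) (Ioo 0 1)) :
    ∫ u in Ioo (0:ℝ) 1, (∑ μ ∈ T, e μ * (u:ℂ) ^ μ)
      = ∑ μ ∈ T, if μ = -1 then 0 else e μ / (μ + 1) := by
  set h : ℝ → ℂ := fun u => ∑ μ ∈ T, e μ * (u:ℂ) ^ μ with hh
  set C : ℂ := ∑ μ ∈ T, if μ = -1 then 0 else e μ / (μ + 1) with hC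
  set I : ℂ := ∫ u in Ioo (0:ℝ) 1, h u with hI
  -- value of the truncated integral
  have hcalc : ∀ ε : ℝ, ε ∈ Ioo (0:ℝ) 1 →
      (∫ u in ε..1, h u) = ∑ μ ∈ T,
        (if μ = -1 then -(Real.log ε : ℂ) * e μ else e μ * (1 - (ε:ℂ)^(μ+1))/(μ+1)) := by
    intro ε hε
    have h0m : (0:ℝ) ∉ Set.uIcc ε 1 := by
      rw [Set.uIcc_of_le hε.2.le]
      intro hmem
      exact absurd hmem.1 (not_le.2 hε.1)
    have hii : ∀ μ : ℂ, IntervalIntegrable (fun u : ℝ => e μ * (u:ℂ)^μ) volume ε 1 :=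
      fun μ => (intervalIntegrable_cpow (Or.inr h0m)).const_mul _
    rw [hh]
    rw [intervalIntegral.integral_finset_sum (fun μ _ => hii μ)]
    apply Finset.sum_congr rfl
    intro μ _
    rw [intervalIntegral.integral_const_mul]
    split_ifs with hm
    · subst hm
      have hcong : ∀ u ∈ Set.uIcc ε (1:ℝ), (u:ℂ)^(-1:ℂ) = ((u⁻¹:ℝ):ℂ) := by
        intro u _
        rw [Complex.cpow_neg_one, Complex.ofReal_inv]
      rw [intervalIntegral.integral_congr hcong, intervalIntegral.integral_ofReal,
        integral_inv_of_pos hε.1 one_pos, one_div, Real.log_inv]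
      push_cast
      ring
    · rw [integral_cpow (Or.inr ⟨hm, h0m⟩)]
      push_cast [Complex.one_cpow]
      ring
  -- the truncated integral tends to I
  have hIcc : IntegrableOn h (Icc 0 1) := by
    rwa [integrableOn_Icc_iff_integrableOn_Ioo]
  have hii01 : IntervalIntegrable h volume 0 1 := by
    rw [intervalIntegrable_iff_integrableOn_Icc_of_le zero_le_one]
    exact hIcc
  have hP : ContinuousOn (fun x => ∫ t in (0:ℝ)..x, h t) (Icc 0 1) := by
    apply (intervalIntegral.continuousOn_primitive_Icc hIcc).congr
    intro x hx
    show (∫ t in (0:ℝ)..x, h t) = ∫ t in Icc 0 x, h t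
    rw [intervalIntegral.integral_of_le hx.1, ← integral_Icc_eq_integral_Ioc]
  have hP0 : Filter.Tendsto (fun x => ∫ t in (0:ℝ)..x, h t) (nhdsWithin 0 (Icc 0 1)) (nhds 0) := by
    have := (hP 0 (by constructor <;> norm_num)).tendsto
    simpa using this
  have hFt : Filter.Tendsto (fun ε => ∫ t in ε..1, h t) (nhdsWithin 0 (Ioi 0)) (nhds I) := by
    have hsub : ∀ ε ∈ Icc (0:ℝ) 1, (∫ t in ε..1, h t)
        = (∫ t in (0:ℝ)..1, h t) - ∫ t in (0:ℝ)..ε, h t := by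
      intro ε hε
      exact (intervalIntegral.integral_interval_sub_left hii01
        (hii01.mono_set (by rw [Set.uIcc_of_le hε.1, Set.uIcc_of_le zero_le_one]; exact Icc_subset_Icc le_rfl hε.2))).symm
    have h01 : (∫ t in (0:ℝ)..1, h t) = I := by
      rw [intervalIntegral.integral_of_le zero_le_one, hI, integral_Ioc_eq_integral_Ioo]
    have htend : Filter.Tendsto (fun ε => (∫ t in (0:ℝ)..1, h t) - ∫ t in (0:ℝ)..ε, h t)
        (nhdsWithin 0 (Icc 0 1)) (nhds I) := by
      have h2 := (tendsto_const_nhds (x := (∫ t in (0:ℝ)..1, h t))).sub hP0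
      rw [sub_zero] at h2
      rw [← h01]
      exact h2
    have hmono : Filter.Tendsto (fun ε : ℝ => ε) (nhdsWithin 0 (Ioi 0)) (nhdsWithin 0 (Icc 0 1)) := by
      rw [← nhdsWithin_Ioo_eq_nhdsGT (zero_lt_one)]
      exact tendsto_nhdsWithin_mono_left Ioo_subset_Icc_self tendsto_id
    have := htend.comp hmono
    apply this.congr'
    filter_upwards [Ioo_mem_nhdsGT_of_mem (Set.left_mem_Ico.2 zero_lt_one)] with ε hε
    exact (hsub ε ⟨hε.1.le, hε.2.le⟩).symm
  -- hence C - truncated tends to C - I, and equals the power sum expression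
  have hDt : Filter.Tendsto (fun ε : ℝ => ∑ μ ∈ T,
      (if μ = -1 then (Real.log ε : ℂ) * e μ else (e μ / (μ+1)) * (ε:ℂ)^(μ+1)))
      (nhdsWithin 0 (Ioi 0)) (nhds (C - I)) := by
    have := (tendsto_const_nhds (x := C)).sub hFt
    apply this.congr'
    filter_upwards [Ioo_mem_nhdsGT_of_mem (Set.left_mem_Ico.2 zero_lt_one)] with ε hε
    rw [hcalc ε hε, hC, ← Finset.sum_sub_distrib]
    apply Finset.sum_congr rfl
    intro μ hμ
    split_ifs with hm
    · ring
    · have hμ1 : μ + 1 ≠ 0 := by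
        intro hc; exact hm (by linear_combination hc)
      field_simp
      ring
  -- compose with ε = exp (-t)
  have hexp : Filter.Tendsto (fun t : ℝ => Real.exp (-t)) atTop (nhdsWithin 0 (Ioi 0)) := by
    apply tendsto_nhdsWithin_of_tendsto_nhds_of_eventually_within
    · exact Real.tendsto_exp_atBot.comp tendsto_neg_atTop_atBot
    · exact Filter.Eventually.of_forall fun t => Real.exp_pos _
  have hcomp := hDt.comp hexp
  have hform : Filter.Tendsto (fun t : ℝ =>
      (∑ μ ∈ T.filter (· ≠ -1), (e μ / (μ + 1)) * Complex.exp (-(μ + 1) * t))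
      + (-(∑ μ ∈ T.filter (· = -1), e μ)) * t + 0) atTop (nhds (C - I)) := by
    apply hcomp.congr'
    filter_upwards [] with t
    simp only [Function.comp]
    rw [add_zero]
    have hsplit : ∑ μ ∈ T,
        (if μ = -1 then ((Real.log (Real.exp (-t)) : ℝ) : ℂ) * e μ
          else (e μ / (μ+1)) * ((Real.exp (-t) : ℝ):ℂ)^(μ+1))
        = (∑ μ ∈ T.filter (· = -1), ((Real.log (Real.exp (-t)) : ℝ) : ℂ) * e μ)
          + ∑ μ ∈ T.filter (¬ · = -1), (e μ / (μ+1)) * ((Real.exp (-t) : ℝ):ℂ)^(μ+1) :=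
      Finset.sum_ite _ _
    rw [hsplit]
    rw [add_comm]
    congr 1
    · apply Finset.sum_congr rfl
      intro μ hμ
      congr 1
      have hne : ((Real.exp (-t) : ℝ):ℂ) = Complex.exp (((-t : ℝ)):ℂ) := by
        rw [Complex.ofReal_exp]
      rw [hne, Complex.cpow_def_of_ne_zero (Complex.exp_ne_zero _),
        Complex.log_exp (by simp [Real.pi_pos]) (by simp [Real.pi_pos.le])]
      congr 1
      push_cast
      ring
    · rw [Real.log_exp, neg_mul, Finset.sum_mul, ← Finset.sum_neg_distrib]
      apply Finset.sum_congr rfl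
      intro μ hμ
      push_cast
      ring
  have := expsum_tendsto (T.filter (· ≠ -1)) (fun μ => e μ / (μ + 1))
      (-(∑ μ ∈ T.filter (· = -1), e μ)) 0 (C - I)
      (fun μ hμ => (Finset.mem_filter.1 hμ).2) hform
  have hCI : (0:ℂ) = C - I := this.2
  linear_combination hCI

section subst

variable {α : ℝ} (hα : 0 < α)

lemma rpow_hasDerivWithinAt {s : Set ℝ} (hs : s ⊆ Ioi 0) :
    ∀ x ∈ s, HasDerivWithinAt (fun u : ℝ => u ^ α) (α * x ^ (α - 1)) s x :=
  fun x hx => (Real.hasDerivAt_rpow_const (Or.inl (ne_of_gt (hs hx)))).hasDerivWithinAt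

include hα in
lemma rpow_injOn {s : Set ℝ} (hs : s ⊆ Ioi 0) : InjOn (fun u : ℝ => u ^ α) s := by
  have : StrictMonoOn (fun u : ℝ => u ^ α) (Ioi 0) :=
    fun x hx y _ hxy => Real.rpow_lt_rpow (le_of_lt hx) hxy hα
  exact (this.injOn).mono hs

include hα in
lemma rpow_image_Ioi : (fun u : ℝ => u ^ α) '' Ioi 1 = Ioi 1 := by
  ext y
  constructor
  · rintro ⟨u, hu, rfl⟩
    exact (Real.one_lt_rpow_iff (zero_lt_one.trans hu).le).2 (Or.inl ⟨hu, hα⟩)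
  · intro hy
    have hy0 : (0:ℝ) < y := lt_trans zero_lt_one hy
    refine ⟨y ^ α⁻¹, ?_, Real.rpow_inv_rpow hy0.le (ne_of_gt hα)⟩
    exact (Real.one_lt_rpow_iff hy0.le).2 (Or.inl ⟨hy, by positivity⟩)

include hα in
lemma rpow_image_Ioo : (fun u : ℝ => u ^ α) '' Ioo 0 1 = Ioo 0 1 := by
  ext y
  constructor
  · rintro ⟨u, hu, rfl⟩
    exact ⟨Real.rpow_pos_of_pos hu.1 _, Real.rpow_lt_one hu.1.le hu.2 hα⟩
  · intro hy
    refine ⟨y ^ α⁻¹, ⟨Real.rpow_pos_of_pos hy.1 _,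
      Real.rpow_lt_one hy.1.le hy.2 (by positivity)⟩, Real.rpow_inv_rpow hy.1.le (ne_of_gt hα)⟩

include hα in
lemma subst_integral {s : Set ℝ} (hs : MeasurableSet s) (hsub : s ⊆ Ioi 0)
    (himg : (fun u : ℝ => u ^ α) '' s = s) (F : ℝ → ℂ) :
    ∫ r in s, F r = ∫ u in s, ((α * u ^ (α - 1) : ℝ) : ℂ) * F (u ^ α) := by
  have h := integral_image_eq_integral_abs_deriv_smul hs (rpow_hasDerivWithinAt hsub)
    (rpow_injOn hα hsub) F
  rw [himg] at h
  rw [h]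
  apply setIntegral_congr_fun hs
  intro u hu
  have hu0 : (0:ℝ) < u := hsub hu
  have hpos : (0:ℝ) < α * u ^ (α - 1) := by positivity
  show |α * u ^ (α - 1)| • F (u ^ α) = ((α * u ^ (α - 1) : ℝ) : ℂ) * F (u ^ α)
  rw [abs_of_pos hpos, Complex.real_smul]

include hα in
lemma subst_integrable {s : Set ℝ} (hs : MeasurableSet s) (hsub : s ⊆ Ioi 0)
    (himg : (fun u : ℝ => u ^ α) '' s = s) (F : ℝ → ℂ) (hF : IntegrableOn F s) :
    IntegrableOn (fun u => ((α * u ^ (α - 1) : ℝ) : ℂ) * F (u ^ α)) s := by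
  have h := (integrableOn_image_iff_integrableOn_abs_deriv_smul hs (rpow_hasDerivWithinAt hsub)
    (rpow_injOn hα hsub) F)
  rw [himg] at h
  apply (h.1 hF).congr_fun _ hs
  intro u hu
  have hu0 : (0:ℝ) < u := hsub hu
  have hpos : (0:ℝ) < α * u ^ (α - 1) := by positivity
  show |α * u ^ (α - 1)| • F (u ^ α) = _
  rw [abs_of_pos hpos, Complex.real_smul]

include hα in
lemma powterm_eq {u : ℝ} (hu : 0 < u) (z k : ℂ) :
    ((α * u ^ (α - 1) : ℝ) : ℂ) * (z * ((u ^ α : ℝ) : ℂ) ^ k)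
      = (α : ℂ) * z * (u : ℂ) ^ ((α : ℂ) * (k + 1) - 1) := by
  have hune : (u : ℂ) ≠ 0 := by
    simp only [ne_eq, Complex.ofReal_eq_zero]
    exact ne_of_gt hu
  have h1 : ((u ^ α : ℝ) : ℂ) = (u : ℂ) ^ (α : ℂ) := Complex.ofReal_cpow hu.le α
  have hlog : Complex.log (u : ℂ) = ((Real.log u : ℝ) : ℂ) := (Complex.ofReal_log hu.le).symm
  have h2 : ((u : ℂ) ^ (α : ℂ)) ^ k = (u : ℂ) ^ ((α : ℂ) * k) := by
    rw [← Complex.cpow_mul]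
    · rw [hlog]; simp [Real.pi_pos]
    · rw [hlog]; simp [Real.pi_pos.le]
  have h3 : ((u ^ (α - 1) : ℝ) : ℂ) = (u : ℂ) ^ ((α : ℂ) - 1) := by
    rw [Complex.ofReal_cpow hu.le]
    push_cast
    ring_nf
  have h4 : (α : ℂ) * (k + 1) - 1 = ((α : ℂ) - 1) + (α : ℂ) * k := by ring
  rw [h1, h2, h4, Complex.cpow_add _ _ hune]
  push_cast [h3]
  ring

end subst

theorem genInt_power_substitution' (f : ℝ → ℂ) (Ω : Finset ℂ) (c : ℂ → ℂ)
    (α : ℝ) (hα : 0 < α) (hf : IntegrableOn f (Ioi 1) ∧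
      IntegrableOn (fun r => f r - ∑ k ∈ Ω, c k * (r : ℂ) ^ k) (Ioo 0 1))
    (Ω' : Finset ℂ) (c' : ℂ → ℂ)
    (hg : IntegrableOn (fun u => ((α * u ^ (α - 1) : ℝ) : ℂ) * f (u ^ α)) (Ioi 1) ∧
      IntegrableOn (fun r => ((α * r ^ (α - 1) : ℝ) : ℂ) * f (r ^ α)
        - ∑ k ∈ Ω', c' k * (r : ℂ) ^ k) (Ioo 0 1)) :
    ((∑ k ∈ Ω, if k = -1 then 0 else c k / (k + 1))
      + (∫ r in Ioo (0:ℝ) 1, (f r - ∑ k ∈ Ω, c k * (r : ℂ) ^ k))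
      + ∫ r in Ioi (1:ℝ), f r)
    = ((∑ k ∈ Ω', if k = -1 then 0 else c' k / (k + 1))
      + (∫ r in Ioo (0:ℝ) 1, (((α * r ^ (α - 1) : ℝ) : ℂ) * f (r ^ α)
          - ∑ k ∈ Ω', c' k * (r : ℂ) ^ k))
      + ∫ r in Ioi (1:ℝ), ((α * r ^ (α - 1) : ℝ) : ℂ) * f (r ^ α)) := by
  set g : ℝ → ℂ := fun u => ((α * u ^ (α - 1) : ℝ) : ℂ) * f (u ^ α) with hgdef
  set φ : ℂ → ℂ := fun k => (α : ℂ) * (k + 1) - 1 with hφ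
  have hαne : (α : ℂ) ≠ 0 := by
    simp only [ne_eq, Complex.ofReal_eq_zero]; exact ne_of_gt hα
  -- Step A : integrals over Ioi 1 agree
  have hA : ∫ r in Ioi (1:ℝ), f r = ∫ u in Ioi (1:ℝ), g u :=
    subst_integral hα measurableSet_Ioi (fun x hx => mem_Ioi.2 (lt_trans zero_lt_one (mem_Ioi.1 hx)))
      (rpow_image_Ioi hα) f
  -- Step B : substitution on (0,1)
  have hB : ∫ r in Ioo (0:ℝ) 1, (f r - ∑ k ∈ Ω, c k * (r : ℂ) ^ k)
      = ∫ u in Ioo (0:ℝ) 1, (g u - ∑ k ∈ Ω, (α : ℂ) * c k * (u : ℂ) ^ (φ k)) := by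
    rw [subst_integral hα measurableSet_Ioo (fun x hx => hx.1) (rpow_image_Ioo hα) _]
    apply setIntegral_congr_fun measurableSet_Ioo
    intro u hu
    show ((α * u ^ (α - 1) : ℝ) : ℂ) * (f (u ^ α) - ∑ k ∈ Ω, c k * ((u ^ α : ℝ) : ℂ) ^ k) = _
    rw [mul_sub, Finset.mul_sum]
    congr 1
    apply Finset.sum_congr rfl
    intro k _
    exact powterm_eq hα hu.1 (c k) k
  -- Step C : integrability of the power sums difference
  have hA1 : IntegrableOn (fun u => g u - ∑ k ∈ Ω, (α : ℂ) * c k * (u : ℂ) ^ (φ k)) (Ioo 0 1) := by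
    have h := subst_integrable hα measurableSet_Ioo (fun x hx => hx.1) (rpow_image_Ioo hα)
      _ hf.2
    apply h.congr_fun _ measurableSet_Ioo
    intro u hu
    show ((α * u ^ (α - 1) : ℝ) : ℂ) * (f (u ^ α) - ∑ k ∈ Ω, c k * ((u ^ α : ℝ) : ℂ) ^ k) = _
    rw [mul_sub, Finset.mul_sum]
    congr 1
    apply Finset.sum_congr rfl
    intro k _
    exact powterm_eq hα hu.1 (c k) k
  have hA2 : IntegrableOn (fun u => g u - ∑ k ∈ Ω', c' k * (u : ℂ) ^ k) (Ioo 0 1) := hg.2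
  have hdiff : IntegrableOn (fun u : ℝ => (∑ j ∈ Ω', c' j * (u : ℂ) ^ j)
      - ∑ k ∈ Ω, (α : ℂ) * c k * (u : ℂ) ^ (φ k)) (Ioo 0 1) := by
    have hsub2 : IntegrableOn (fun u : ℝ => (g u - ∑ k ∈ Ω, (α : ℂ) * c k * (u : ℂ) ^ (φ k))
        - (g u - ∑ j ∈ Ω', c' j * (u : ℂ) ^ j)) (Ioo 0 1) := hA1.sub hA2
    apply hsub2.congr_fun _ measurableSet_Ioo
    intro u _
    ring
  -- Step D : combination of the two power sums over one index set
  set T : Finset ℂ := Ω.image φ ∪ Ω' with hT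
  set e : ℂ → ℂ := fun μ => (∑ j ∈ Ω'.filter (fun j => j = μ), c' j)
      - (α : ℂ) * ∑ k ∈ Ω.filter (fun k => φ k = μ), c k with he
  have hcomb : ∀ X : ℂ → ℂ, (∑ μ ∈ T, e μ * X μ)
      = (∑ j ∈ Ω', c' j * X j) - (α : ℂ) * ∑ k ∈ Ω, c k * X (φ k) := by
    intro X
    have h1 : (∑ μ ∈ T, (∑ j ∈ Ω'.filter (fun j => j = μ), c' j) * X μ)
        = ∑ j ∈ Ω', c' j * X j := by
      rw [← Finset.sum_fiberwise_of_maps_to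
        (fun j (hj : j ∈ Ω') => Finset.mem_union_right _ hj) (fun j => c' j * X j)]
      apply Finset.sum_congr rfl
      intro μ _
      rw [Finset.sum_mul]
      apply Finset.sum_congr rfl
      intro j hj
      rw [(Finset.mem_filter.1 hj).2]
    have h2 : (∑ μ ∈ T, (∑ k ∈ Ω.filter (fun k => φ k = μ), c k) * X μ)
        = ∑ k ∈ Ω, c k * X (φ k) := by
      rw [← Finset.sum_fiberwise_of_maps_to
        (fun k (hk : k ∈ Ω) => Finset.mem_union_left _ (Finset.mem_image_of_mem φ hk))
        (fun k => c k * X (φ k))]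
      apply Finset.sum_congr rfl
      intro μ _
      rw [Finset.sum_mul]
      apply Finset.sum_congr rfl
      intro k hk
      rw [(Finset.mem_filter.1 hk).2]
    calc (∑ μ ∈ T, e μ * X μ)
        = ∑ μ ∈ T, ((∑ j ∈ Ω'.filter (fun j => j = μ), c' j) * X μ
            - (α : ℂ) * ((∑ k ∈ Ω.filter (fun k => φ k = μ), c k) * X μ)) := by
          apply Finset.sum_congr rfl
          intro μ _
          rw [he]
          ring
      _ = _ := by
          rw [Finset.sum_sub_distrib, ← Finset.mul_sum, h1, h2]
  -- Step E/F : value of the integral of the power sum difference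
  have hEq : ∀ u : ℝ, (∑ μ ∈ T, e μ * (u : ℂ) ^ μ)
      = (∑ j ∈ Ω', c' j * (u : ℂ) ^ j) - ∑ k ∈ Ω, (α : ℂ) * c k * (u : ℂ) ^ (φ k) := by
    intro u
    rw [hcomb (fun μ => (u : ℂ) ^ μ), Finset.mul_sum]
    congr 1
    apply Finset.sum_congr rfl
    intro k _
    ring
  have hIB : IntegrableOn (fun u : ℝ => ∑ μ ∈ T, e μ * (u : ℂ) ^ μ) (Ioo 0 1) := by
    apply hdiff.congr_fun _ measurableSet_Ioo
    intro u _
    exact (hEq u).symm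
  have hval : ∫ u in Ioo (0:ℝ) 1, ((∑ j ∈ Ω', c' j * (u : ℂ) ^ j)
        - ∑ k ∈ Ω, (α : ℂ) * c k * (u : ℂ) ^ (φ k))
      = ∑ μ ∈ T, if μ = -1 then 0 else e μ / (μ + 1) := by
    rw [← integral_powsum T e hIB]
    apply setIntegral_congr_fun measurableSet_Ioo
    intro u _
    exact (hEq u).symm
  -- Step G : the coefficient sum identity
  have hG : (∑ μ ∈ T, if μ = -1 then 0 else e μ / (μ + 1))
      = (∑ j ∈ Ω', if j = -1 then 0 else c' j / (j + 1))
        - ∑ k ∈ Ω, if k = -1 then 0 else c k / (k + 1) := by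
    have hX := hcomb (fun μ => if μ = -1 then 0 else (μ + 1)⁻¹)
    have hL : (∑ μ ∈ T, e μ * (if μ = -1 then 0 else (μ + 1)⁻¹))
        = ∑ μ ∈ T, if μ = -1 then 0 else e μ / (μ + 1) := by
      apply Finset.sum_congr rfl
      intro μ _
      split_ifs with hm
      · ring
      · rw [div_eq_mul_inv]
    have hR1 : (∑ j ∈ Ω', c' j * (if j = -1 then 0 else (j + 1)⁻¹))
        = ∑ j ∈ Ω', if j = -1 then 0 else c' j / (j + 1) := by
      apply Finset.sum_congr rfl
      intro j _
      split_ifs with hm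
      · ring
      · rw [div_eq_mul_inv]
    have hφm1 : ∀ k : ℂ, (φ k = -1) ↔ (k = -1) := by
      intro k
      rw [hφ]
      constructor
      · intro hk
        have : (α : ℂ) * (k + 1) = 0 := by linear_combination hk
        rcases mul_eq_zero.1 this with h | h
        · exact absurd h hαne
        · linear_combination h
      · intro hk
        rw [hk]
        ring
    have hR2 : (α : ℂ) * (∑ k ∈ Ω, c k * (if φ k = -1 then 0 else (φ k + 1)⁻¹))
        = ∑ k ∈ Ω, if k = -1 then 0 else c k / (k + 1) := by
      rw [Finset.mul_sum]
      apply Finset.sum_congr rfl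
      intro k _
      simp only [hφm1 k]
      split_ifs with hm
      · ring
      · have hk1 : k + 1 ≠ 0 := fun hc => hm (by linear_combination hc)
        have hφ1 : φ k + 1 ≠ 0 := by
          rw [hφ]
          intro hc
          rcases mul_eq_zero.1 (show (α:ℂ) * (k+1) = 0 by linear_combination hc) with h | h
          · exact hαne h
          · exact hk1 h
        have hφk : φ k = (α : ℂ) * (k + 1) - 1 := rfl
        rw [hφk] at hφ1 ⊢
        field_simp
        ring
    rw [← hL, hX, hR1, ← hR2]
  -- Step H : assemble
  have hsplit : ∫ u in Ioo (0:ℝ) 1, (g u - ∑ k ∈ Ω, (α : ℂ) * c k * (u : ℂ) ^ (φ k))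
      = (∫ u in Ioo (0:ℝ) 1, (g u - ∑ j ∈ Ω', c' j * (u : ℂ) ^ j))
        + ∫ u in Ioo (0:ℝ) 1, ((∑ j ∈ Ω', c' j * (u : ℂ) ^ j)
            - ∑ k ∈ Ω, (α : ℂ) * c k * (u : ℂ) ^ (φ k)) := by
    rw [← integral_add hA2 hdiff]
    apply setIntegral_congr_fun measurableSet_Ioo
    intro u _
    ring
  rw [hA, hB, hsplit, hval, hG]
  ring

end Aux

theorem genInt_power_substitution (f : ℝ → ℂ) (Ω : Finset ℂ) (c : ℂ → ℂ)
    (α : ℝ) (hα : 0 < α) (hf : GenIntegrable f Ω c)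
    (Ω' : Finset ℂ) (c' : ℂ → ℂ)
    (hg : GenIntegrable (fun u => ((α * u ^ (α - 1) : ℝ) : ℂ) * f (u ^ α)) Ω' c') :
    genInt f Ω c
      = genInt (fun u => ((α * u ^ (α - 1) : ℝ) : ℂ) * f (u ^ α)) Ω' c' := by
  unfold genInt
  exact genInt_power_substitution' f Ω c α hα hf Ω' c' hg
end

section
/- For real α > 1/2 and real 0 < r < R, the Macdonald function satisfies the inequality K_α(r)/K_α(R) < e^{R−r} (R/r)^α. -/
open MeasureTheory Set Real

/-- The Macdonald function for real order and argument. -/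
noncomputable def macdonaldK (α : ℝ) (r : ℝ) : ℝ :=
  (1 / 2) * ∫ s in Ioi (0:ℝ), Real.exp (-(r / 2) * (s + s⁻¹)) * s ^ (α - 1)

lemma pow_le_exp_aux (m : ℕ) {x : ℝ} (hx : 0 ≤ x) : x ^ m ≤ (m:ℝ)^m * Real.exp x := by
  rcases Nat.eq_zero_or_pos m with hm | hm
  · simp [hm, Real.one_le_exp hx]
  · have hm' : (0:ℝ) < m := by exact_mod_cast hm
    have h1 : x / m ≤ Real.exp (x / m) := by
      have := Real.add_one_le_exp (x / m)
      linarith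
    have h2 : (x / m) ^ m ≤ (Real.exp (x / m)) ^ m :=
      pow_le_pow_left₀ (by positivity) h1 m
    have h3 : (Real.exp (x / m)) ^ m = Real.exp x := by
      rw [← Real.exp_nat_mul]
      congr 1
      field_simp
    calc x ^ m = ((m:ℝ) * (x / m)) ^ m := by rw [mul_div_cancel₀]; exact ne_of_gt hm'
    _ = (m:ℝ)^m * (x/m)^m := mul_pow _ _ _
    _ ≤ (m:ℝ)^m * Real.exp x := by rw [← h3]; exact mul_le_mul_of_nonneg_left h2 (by positivity)

lemma exp_neg_div_le (m : ℕ) {a u : ℝ} (ha : 0 < a) (hu : 0 < u) :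
    Real.exp (-(a/u)) ≤ ((m:ℝ)^m / a^m) * u ^ m := by
  have hx : (0:ℝ) < a/u := by positivity
  have h := pow_le_exp_aux m (x := a/u) (by positivity)
  have h2 : Real.exp (-(a/u)) * (a/u)^m ≤ (m:ℝ)^m := by
    calc Real.exp (-(a/u)) * (a/u)^m ≤ Real.exp (-(a/u)) * ((m:ℝ)^m * Real.exp (a/u)) :=
          mul_le_mul_of_nonneg_left h (Real.exp_nonneg _)
      _ = (m:ℝ)^m := by rw [Real.exp_neg]; field_simp
  have h3 : Real.exp (-(a/u)) ≤ (m:ℝ)^m / (a/u)^m := by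
    rw [le_div_iff₀ (pow_pos hx m)]; exact h2
  calc Real.exp (-(a/u)) ≤ (m:ℝ)^m / (a/u)^m := h3
    _ = ((m:ℝ)^m / a^m) * u ^ m := by
        rw [div_pow]; field_simp

lemma integrableOn_kernel (β : ℝ) {a b : ℝ} (ha : 0 < a) (hb : 0 < b) :
    IntegrableOn (fun u : ℝ => Real.exp (-(a/u) - b*u) * u ^ β) (Ioi (0:ℝ)) := by
  have hcont : ContinuousOn (fun u : ℝ => Real.exp (-(a/u) - b*u) * u ^ β) (Ioi 0) := by
    have c1 : ContinuousOn (fun u:ℝ => -(a/u) - b*u) (Ioi 0) :=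
      ((continuousOn_const.div continuousOn_id (fun x hx => ne_of_gt hx)).neg).sub
        ((continuous_const.mul continuous_id).continuousOn)
    have c2 : ContinuousOn (fun u:ℝ => Real.exp (-(a/u) - b*u)) (Ioi 0) :=
      Real.continuous_exp.comp_continuousOn c1
    have c3 : ContinuousOn (fun u:ℝ => u ^ β) (Ioi 0) := fun u hu =>
      (Real.continuousAt_rpow_const u β (Or.inl (ne_of_gt hu))).continuousWithinAt
    exact c2.mul c3
  rw [← Ioc_union_Ioi_eq_Ioi (zero_le_one)]
  apply IntegrableOn.union
  · set m := ⌈-β⌉₊ with hm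
    have hmb : -β ≤ (m:ℝ) := Nat.le_ceil _
    have hmeas : AEStronglyMeasurable (fun u : ℝ => Real.exp (-(a/u) - b*u) * u ^ β)
        (volume.restrict (Ioc (0:ℝ) 1)) :=
      (hcont.mono Ioc_subset_Ioi_self).aestronglyMeasurable measurableSet_Ioc
    refine Integrable.mono' (g := fun _ => ((m:ℝ)^m / a^m))
      (integrableOn_const measure_Ioc_lt_top.ne) hmeas ?_
    filter_upwards [ae_restrict_mem measurableSet_Ioc] with u hu
    obtain ⟨hu0, hu1⟩ := hu
    have h1 : Real.exp (-(a/u) - b*u) ≤ Real.exp (-(a/u)) := by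
      apply Real.exp_le_exp.2
      nlinarith [div_nonneg ha.le hu0.le]
    have h2 : Real.exp (-(a/u)) ≤ ((m:ℝ)^m / a^m) * u ^ m := exp_neg_div_le m ha hu0
    have h3 : u ^ m * u ^ β ≤ 1 := by
      rw [← Real.rpow_natCast u m, ← Real.rpow_add hu0]
      exact Real.rpow_le_one hu0.le hu1 (by linarith)
    have hβ0 : (0:ℝ) ≤ u ^ β := Real.rpow_nonneg hu0.le β
    rw [Real.norm_eq_abs, abs_of_nonneg (by positivity)]
    calc Real.exp (-(a/u) - b*u) * u ^ β ≤ (((m:ℝ)^m / a^m) * u ^ m) * u ^ β := by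
          apply mul_le_mul_of_nonneg_right (le_trans h1 h2) hβ0
      _ = ((m:ℝ)^m / a^m) * (u ^ m * u ^ β) := by ring
      _ ≤ ((m:ℝ)^m / a^m) * 1 := by
          apply mul_le_mul_of_nonneg_left h3 (by positivity)
      _ = (m:ℝ)^m / a^m := mul_one _
  · set m := ⌈β⌉₊ with hm
    have hβm : β ≤ (m:ℝ) := Nat.le_ceil _
    have hGamma : IntegrableOn (fun x : ℝ => Real.exp (-x) * x ^ (((m:ℝ)+1) - 1)) (Ioi 0) :=
      Real.GammaIntegral_convergent (by positivity)
    have hcomp : IntegrableOn (fun u : ℝ => Real.exp (-(b*u)) * (b*u) ^ (((m:ℝ)+1) - 1)) (Ioi 0) := by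
      rw [show (0:ℝ) = b * 0 by ring] at hGamma
      exact (integrableOn_Ioi_comp_mul_left_iff
        (fun x : ℝ => Real.exp (-x) * x ^ (((m:ℝ)+1) - 1)) 0 hb).2 hGamma
    have hint : IntegrableOn
        (fun u : ℝ => b^(-(m:ℝ)) * (Real.exp (-(b*u)) * (b*u) ^ (((m:ℝ)+1) - 1))) (Ioi 1) :=
      ((hcomp.mono_set (Ioi_subset_Ioi zero_le_one)).const_mul _)
    refine Integrable.mono' hint
      ((hcont.mono (Ioi_subset_Ioi zero_le_one)).aestronglyMeasurable measurableSet_Ioi) ?_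
    filter_upwards [ae_restrict_mem measurableSet_Ioi] with u hu
    have hu1 : (1:ℝ) < u := hu
    have hu0 : (0:ℝ) < u := lt_trans one_pos hu1
    have h1 : Real.exp (-(a/u) - b*u) ≤ Real.exp (-(b*u)) := by
      apply Real.exp_le_exp.2
      nlinarith [div_nonneg ha.le hu0.le]
    have h2 : u ^ β ≤ u ^ (m:ℝ) := Real.rpow_le_rpow_of_exponent_le hu1.le hβm
    have h3 : b^(-(m:ℝ)) * (Real.exp (-(b*u)) * (b*u) ^ (((m:ℝ)+1) - 1))
        = Real.exp (-(b*u)) * u ^ (m:ℝ) := by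
      rw [add_sub_cancel_right, Real.mul_rpow hb.le hu0.le]
      rw [show b^(-(m:ℝ)) * (Real.exp (-(b*u)) * (b ^ (m:ℝ) * u ^ (m:ℝ)))
        = (b^(-(m:ℝ)) * b ^ (m:ℝ)) * (Real.exp (-(b*u)) * u ^ (m:ℝ)) by ring]
      rw [← Real.rpow_add hb, neg_add_cancel, Real.rpow_zero, one_mul]
    rw [Real.norm_eq_abs, abs_of_nonneg (by positivity), h3]
    calc Real.exp (-(a/u) - b*u) * u ^ β ≤ Real.exp (-(b*u)) * u ^ β :=
          mul_le_mul_of_nonneg_right h1 (Real.rpow_nonneg hu0.le β)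
      _ ≤ Real.exp (-(b*u)) * u ^ (m:ℝ) :=
          mul_le_mul_of_nonneg_left h2 (Real.exp_nonneg _)

noncomputable def mker (α ρ u : ℝ) : ℝ := Real.exp (ρ - ρ^2/(2*u) - u/2) * u ^ (α - 1)

noncomputable def mkerD (α ρ u : ℝ) : ℝ := (1 - ρ/u) * mker α ρ u

lemma intOn_master (β : ℝ) {a b : ℝ} (c d : ℝ) (ha : 0 < a) (hb : 0 < b) :
    IntegrableOn (fun u : ℝ => (1 + c/u) * (Real.exp (d - a/u - b*u) * u ^ β)) (Ioi (0:ℝ)) := by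
  have base : IntegrableOn (fun u : ℝ => Real.exp d * (Real.exp (-(a/u) - b*u) * u ^ β
      + c * (Real.exp (-(a/u) - b*u) * u ^ (β-1)))) (Ioi (0:ℝ)) :=
    (((integrableOn_kernel β ha hb).add
      ((integrableOn_kernel (β-1) ha hb).const_mul c)).const_mul (Real.exp d))
  refine base.congr_fun (fun u hu => ?_) measurableSet_Ioi
  have hu0 : (0:ℝ) < u := hu
  have h1 : Real.exp (d - a/u - b*u) = Real.exp d * Real.exp (-(a/u) - b*u) := by
    rw [← Real.exp_add]; ring_nf
  have h2 : u ^ (β - 1) = u ^ β * u⁻¹ := by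
    rw [show β - 1 = β + (-1) by ring, Real.rpow_add hu0, Real.rpow_neg_one]
  simp only [h1, h2]
  field_simp

lemma mker_contOn (α ρ : ℝ) : ContinuousOn (mker α ρ) (Ioi (0:ℝ)) := by
  have c1 : ContinuousOn (fun u:ℝ => ρ - ρ^2/(2*u) - u/2) (Ioi 0) := by
    refine ContinuousOn.sub (ContinuousOn.sub continuousOn_const ?_) ?_
    · exact continuousOn_const.div (by fun_prop) (fun x hx => by
        have : (0:ℝ) < x := hx; positivity)
    · fun_prop
  have c2 := Real.continuous_exp.comp_continuousOn c1
  have c3 : ContinuousOn (fun u:ℝ => u ^ (α-1)) (Ioi 0) := fun u hu =>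
    (Real.continuousAt_rpow_const u (α-1) (Or.inl (ne_of_gt hu))).continuousWithinAt
  exact c2.mul c3

lemma mkerD_contOn (α ρ : ℝ) : ContinuousOn (mkerD α ρ) (Ioi (0:ℝ)) := by
  refine ContinuousOn.mul ?_ (mker_contOn α ρ)
  exact continuousOn_const.sub (continuousOn_const.div continuousOn_id
    (fun x hx => ne_of_gt hx))

lemma mker_integrableOn (α : ℝ) {ρ : ℝ} (hρ : 0 < ρ) :
    IntegrableOn (mker α ρ) (Ioi (0:ℝ)) := by
  have h0 : IntegrableOn (fun u : ℝ =>
      (1 + 0/u) * (Real.exp (ρ - (ρ^2/2)/u - (1/2)*u) * u ^ (α-1))) (Ioi (0:ℝ)) :=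
    intOn_master (α-1) 0 ρ (a := ρ^2/2) (b := 1/2) (by positivity) (by norm_num)
  refine h0.congr_fun (fun u hu => ?_) measurableSet_Ioi
  have hu0 : (0:ℝ) < u := hu
  unfold mker
  simp only
  rw [show (1:ℝ) + 0/u = 1 by simp, one_mul]
  congr 2
  field_simp

lemma J_eq (α : ℝ) {r : ℝ} (hr : 0 < r) :
    ∫ u in Ioi (0:ℝ), mker α r u = 2 * Real.exp r * r ^ α * macdonaldK α r := by
  have h1 : (∫ s in Ioi (0:ℝ), (fun u : ℝ => Real.exp (-(u/2) - r^2/(2*u)) * u ^ (α-1)) (r * s))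
      = r⁻¹ • ∫ u in Ioi (0:ℝ), Real.exp (-(u/2) - r^2/(2*u)) * u ^ (α-1) := by
    have := integral_comp_mul_left_Ioi
      (fun u : ℝ => Real.exp (-(u/2) - r^2/(2*u)) * u ^ (α-1)) 0 hr
    rw [mul_zero] at this; exact this
  have h2 : (∫ s in Ioi (0:ℝ), (fun u : ℝ => Real.exp (-(u/2) - r^2/(2*u)) * u ^ (α-1)) (r * s))
      = r ^ (α-1) * ∫ s in Ioi (0:ℝ), Real.exp (-(r/2)*(s+s⁻¹)) * s ^ (α-1) := by
    rw [← integral_const_mul]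
    refine setIntegral_congr_fun measurableSet_Ioi (fun s hs => ?_)
    have hs0 : (0:ℝ) < s := hs
    simp only
    rw [Real.mul_rpow hr.le hs0.le]
    have hAB : -(r*s/2) - r^2/(2*(r*s)) = -(r/2)*(s+s⁻¹) := by field_simp; ring
    rw [hAB]
    ring
  have hB : (∫ u in Ioi (0:ℝ), Real.exp (-(u/2) - r^2/(2*u)) * u ^ (α-1))
      = r ^ α * ∫ s in Ioi (0:ℝ), Real.exp (-(r/2)*(s+s⁻¹)) * s ^ (α-1) := by
    have hr1 : r * r ^ (α-1) = r ^ α := by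
      have h := Real.rpow_add hr 1 (α-1)
      rw [Real.rpow_one] at h
      rw [← h]
      ring_nf
    have key := h1.symm.trans h2
    rw [smul_eq_mul, inv_mul_eq_iff_eq_mul₀ (ne_of_gt hr)] at key
    rw [key, ← mul_assoc, hr1]
  have hm : (∫ u in Ioi (0:ℝ), mker α r u)
      = Real.exp r * ∫ u in Ioi (0:ℝ), Real.exp (-(u/2) - r^2/(2*u)) * u ^ (α-1) := by
    rw [← integral_const_mul]
    refine setIntegral_congr_fun measurableSet_Ioi (fun u hu => ?_)
    unfold mker
    rw [← mul_assoc, ← Real.exp_add]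
    congr 2
    ring
  rw [hm, hB]
  unfold macdonaldK
  ring

lemma hasDeriv_J (α : ℝ) {ρ₀ : ℝ} (hρ : 0 < ρ₀) :
    IntegrableOn (mkerD α ρ₀) (Ioi (0:ℝ)) ∧
      HasDerivAt (fun ρ => ∫ u in Ioi (0:ℝ), mker α ρ u)
        (∫ u in Ioi (0:ℝ), mkerD α ρ₀ u) ρ₀ := by
  have hbd : IntegrableOn (fun u : ℝ =>
      (1 + (3*ρ₀/2)/u) * (Real.exp (3*ρ₀/2 - (ρ₀^2/8)/u - (1/2)*u) * u ^ (α-1))) (Ioi (0:ℝ)) :=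
    intOn_master (α-1) (3*ρ₀/2) (3*ρ₀/2) (by positivity) (by norm_num)
  refine hasDerivAt_integral_of_dominated_loc_of_deriv_le (s := Metric.ball ρ₀ (ρ₀/2)) (Metric.ball_mem_nhds _ (by positivity))
    ?_ ?_ ?_ ?_ hbd ?_
  · exact Filter.Eventually.of_forall (fun x =>
      ((mker_contOn α x).aestronglyMeasurable measurableSet_Ioi))
  · exact mker_integrableOn α hρ
  · exact (mkerD_contOn α ρ₀).aestronglyMeasurable measurableSet_Ioi
  · refine (ae_restrict_iff' measurableSet_Ioi).2 (Filter.Eventually.of_forall (fun u hu => ?_))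
    intro x hx
    have hu0 : (0:ℝ) < u := hu
    rw [Metric.mem_ball, Real.dist_eq, abs_lt] at hx
    have hx2 : x < 3*ρ₀/2 := by linarith [hx.2]
    have hx0 : 0 < x := by linarith [hx.1]
    unfold mkerD mker
    rw [Real.norm_eq_abs, abs_mul, abs_mul]
    have e1 : |Real.exp (x - x^2/(2*u) - u/2)| ≤ Real.exp (3*ρ₀/2 - (ρ₀^2/8)/u - (1/2)*u) := by
      rw [abs_of_pos (Real.exp_pos _)]
      apply Real.exp_le_exp.2
      have h9 : (ρ₀^2/8)/u ≤ x^2/(2*u) := by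
        rw [div_le_div_iff₀ (by positivity) (by positivity)]
        have h5 : ρ₀/2 ≤ x := by linarith [hx.1]
        have hq : 0 ≤ ((x - ρ₀/2) * (x + ρ₀/2)) * u :=
          mul_nonneg (mul_nonneg (by linarith) (by linarith)) hu0.le
        nlinarith [hq]
      linarith
    have e2 : |1 - x/u| ≤ 1 + (3*ρ₀/2)/u := by
      have hxu : x/u ≤ (3*ρ₀/2)/u := by gcongr
      have hxu0 : 0 ≤ x/u := by positivity
      rw [abs_le]
      constructor <;> nlinarith
    have e3 : |u ^ (α-1)| = u ^ (α-1) := abs_of_nonneg (Real.rpow_nonneg hu0.le _)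
    rw [e3]
    have inner : |Real.exp (x - x^2/(2*u) - u/2)| * u ^ (α-1)
        ≤ Real.exp (3*ρ₀/2 - (ρ₀^2/8)/u - (1/2)*u) * u ^ (α-1) :=
      mul_le_mul_of_nonneg_right e1 (Real.rpow_nonneg hu0.le _)
    exact mul_le_mul e2 inner (by positivity) (by positivity)
  · refine (ae_restrict_iff' measurableSet_Ioi).2 (Filter.Eventually.of_forall (fun u hu => ?_))
    intro x hx
    have hu0 : (0:ℝ) < u := hu
    have h : HasDerivAt (fun y : ℝ => y - y^2/(2*u) - u/2) (1 - x/u) x := by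
      have h1 := ((hasDerivAt_id x).sub ((hasDerivAt_pow 2 x).div_const (2*u))).sub_const (u/2)
      exact h1.congr_deriv (by field_simp; ring)
    have h2 := (h.exp).mul_const (u ^ (α-1))
    exact h2.congr_deriv (by unfold mkerD mker; ring)

lemma keypos {α ρ u : ℝ} (hα : 1/2 < α) (hρ : 0 < ρ) (hu : ρ < u) :
    0 < |ρ^2 * -((u:ℝ)^2)⁻¹| • mkerD α ρ (ρ^2 * u⁻¹) + mkerD α ρ u := by
  have hu0 : (0:ℝ) < u := lt_trans hρ hu
  have hx0 : (0:ℝ) < ρ/u := by positivity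
  have hx1 : ρ/u < 1 := (div_lt_one hu0).2 hu
  set E := Real.exp (ρ - ρ^2/(2*u) - u/2) with hE
  have habs : |ρ^2 * -((u:ℝ)^2)⁻¹| = ρ^2 * (u^2)⁻¹ := by
    rw [abs_mul, abs_neg, abs_inv, abs_of_nonneg (by positivity : (0:ℝ) ≤ ρ^2),
      abs_of_nonneg (by positivity : (0:ℝ) ≤ u^2)]
  have s1 : ρ/(ρ^2*u⁻¹) = u/ρ := by field_simp
  have s2 : ρ - ρ^2/(2*(ρ^2*u⁻¹)) - (ρ^2*u⁻¹)/2 = ρ - ρ^2/(2*u) - u/2 := by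
    field_simp
    ring
  have s3 : (ρ^2*u⁻¹)^(α-1) = u^(α-1) * (ρ/u)^(2*α-2) := by
    rw [show ρ^2 * u⁻¹ = u * (ρ/u)^2 by field_simp]
    rw [Real.mul_rpow hu0.le (by positivity), ← Real.rpow_natCast (ρ/u) 2,
      ← Real.rpow_mul hx0.le]
    congr 1
    push_cast
    ring
  have s4 : (ρ/u)^(2*α-1) = (ρ/u)^(2*α-2) * (ρ/u) := by
    rw [show 2*α-1 = (2*α-2)+1 by ring, Real.rpow_add hx0, Real.rpow_one]
  have claim2 : |ρ^2 * -((u:ℝ)^2)⁻¹| • mkerD α ρ (ρ^2 * u⁻¹)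
      = -((1 - ρ/u) * (E * (u^(α-1) * (ρ/u)^(2*α-1)))) := by
    rw [smul_eq_mul, habs]
    unfold mkerD mker
    rw [s1, s2, s3, s4, ← hE]
    field_simp
    ring
  have claim1 : mkerD α ρ u = (1 - ρ/u) * (E * u^(α-1)) := by
    unfold mkerD mker
    rw [← hE]
  rw [claim2, claim1]
  have c1 : (0:ℝ) < 1 - ρ/u := by linarith
  have c2 : (0:ℝ) < E := Real.exp_pos _
  have c3 : (0:ℝ) < u^(α-1) := Real.rpow_pos_of_pos hu0 _
  have c4 : (ρ/u)^(2*α-1) < 1 := Real.rpow_lt_one hx0.le hx1 (by linarith)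
  have c5 : (0:ℝ) < (1 - ρ/u) * (E * u^(α-1)) := by positivity
  nlinarith [mul_pos c5 (show (0:ℝ) < 1 - (ρ/u)^(2*α-1) by linarith)]

lemma D_pos {α : ℝ} (hα : 1/2 < α) {ρ : ℝ} (hρ : 0 < ρ) :
    0 < ∫ u in Ioi (0:ℝ), mkerD α ρ u := by
  have hint : IntegrableOn (mkerD α ρ) (Ioi (0:ℝ)) := (hasDeriv_J α hρ).1
  set f : ℝ → ℝ := fun u => ρ^2 * u⁻¹ with hf
  have hderiv : ∀ u ∈ Ioi ρ, HasDerivWithinAt f (ρ^2 * -((u^2)⁻¹)) (Ioi ρ) u := by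
    intro u hu
    have hu0 : u ≠ 0 := (lt_trans hρ hu).ne'
    exact ((hasDerivAt_inv hu0).const_mul (ρ^2)).hasDerivWithinAt
  have hinj : InjOn f (Ioi ρ) := by
    intro u hu v hv h
    have hu0 : u ≠ 0 := (lt_trans hρ hu).ne'
    have hv0 : v ≠ 0 := (lt_trans hρ hv).ne'
    have h2 : u⁻¹ = v⁻¹ := mul_left_cancel₀ (by positivity : (ρ:ℝ)^2 ≠ 0) h
    exact inv_injective h2
  have himg : f '' (Ioi ρ) = Ioo 0 ρ := by
    ext y
    constructor
    · rintro ⟨u, hu, rfl⟩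
      have hu0 : (0:ℝ) < u := lt_trans hρ hu
      have hρu : ρ < u := hu
      constructor
      · show (0:ℝ) < ρ^2 * u⁻¹; positivity
      · show ρ^2 * u⁻¹ < ρ
        rw [← div_eq_mul_inv, div_lt_iff₀ hu0]
        nlinarith
    · rintro ⟨hy0, hyρ⟩
      refine ⟨ρ^2/y, ?_, ?_⟩
      · show ρ < ρ^2/y
        rw [lt_div_iff₀ hy0]
        nlinarith
      · show ρ^2 * (ρ^2/y)⁻¹ = y
        field_simp
    -- done
  have hcov := integral_image_eq_integral_abs_deriv_smul measurableSet_Ioi hderiv hinj (mkerD α ρ)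
  rw [himg] at hcov
  have hcovInt : IntegrableOn (fun u => |ρ^2 * -((u^2)⁻¹)| • mkerD α ρ (f u)) (Ioi ρ) := by
    rw [← integrableOn_image_iff_integrableOn_abs_deriv_smul measurableSet_Ioi hderiv hinj]
    rw [himg]
    exact hint.mono_set (fun x hx => hx.1)
  have hsplit : (∫ u in Ioi (0:ℝ), mkerD α ρ u)
      = (∫ u in Ioc 0 ρ, mkerD α ρ u) + ∫ u in Ioi ρ, mkerD α ρ u := by
    rw [← setIntegral_union (Ioc_disjoint_Ioi le_rfl) measurableSet_Ioi
      (hint.mono_set Ioc_subset_Ioi_self) (hint.mono_set (Ioi_subset_Ioi hρ.le)),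
      Ioc_union_Ioi_eq_Ioi hρ.le]
  rw [hsplit, integral_Ioc_eq_integral_Ioo, hcov,
    ← integral_add hcovInt (hint.mono_set (Ioi_subset_Ioi hρ.le))]
  set g : ℝ → ℝ := fun u => |ρ^2 * -((u^2)⁻¹)| • mkerD α ρ (f u) + mkerD α ρ u with hg
  have hgpos : ∀ u ∈ Ioi ρ, 0 < g u := fun u hu => keypos hα hρ hu
  have hgint : IntegrableOn g (Ioi ρ) :=
    hcovInt.add (hint.mono_set (Ioi_subset_Ioi hρ.le))
  have hnn : 0 ≤ᶠ[ae (volume.restrict (Ioi ρ))] g :=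
    (ae_restrict_iff' measurableSet_Ioi).2 (Filter.Eventually.of_forall
      (fun u hu => (hgpos u hu).le))
  rw [setIntegral_pos_iff_support_of_nonneg_ae hnn hgint]
  have hsub : Ioi ρ ⊆ Function.support g ∩ Ioi ρ :=
    fun x hx => ⟨ne_of_gt (hgpos x hx), hx⟩
  refine lt_of_lt_of_le ?_ (measure_mono hsub)
  rw [Real.volume_Ioi]
  simp

lemma J_pos (α : ℝ) {r : ℝ} (hr : 0 < r) : 0 < ∫ u in Ioi (0:ℝ), mker α r u := by
  have hnn : 0 ≤ᶠ[ae (volume.restrict (Ioi (0:ℝ)))] mker α r :=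
    (ae_restrict_iff' measurableSet_Ioi).2 (Filter.Eventually.of_forall
      (fun u hu => by
        unfold mker
        have hu0 : (0:ℝ) < u := hu
        positivity))
  rw [setIntegral_pos_iff_support_of_nonneg_ae hnn (mker_integrableOn α hr)]
  have hsub : Ioi (0:ℝ) ⊆ Function.support (mker α r) ∩ Ioi 0 := fun x hx => by
    refine ⟨ne_of_gt ?_, hx⟩
    have hx0 : (0:ℝ) < x := hx
    unfold mker
    positivity
  refine lt_of_lt_of_le ?_ (measure_mono hsub)
  rw [Real.volume_Ioi]
  simp

lemma macdonaldK_pos (α : ℝ) {r : ℝ} (hr : 0 < r) : 0 < macdonaldK α r := by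
  have h := J_eq α hr
  have hJ := J_pos α hr
  have hK : macdonaldK α r = (∫ u in Ioi (0:ℝ), mker α r u) / (2 * Real.exp r * r ^ α) := by
    rw [h]
    field_simp
  rw [hK]
  positivity

theorem macdonaldK_ratio_lt (α r R : ℝ) (hα : 1 / 2 < α) (hr : 0 < r) (hrR : r < R) :
    macdonaldK α r / macdonaldK α R < Real.exp (R - r) * (R / r) ^ α := by
  have hR : 0 < R := lt_trans hr hrR
  have hcont : ContinuousOn (fun ρ => ∫ u in Ioi (0:ℝ), mker α ρ u) (Ici r) := fun x hx =>
    ((hasDeriv_J α (lt_of_lt_of_le hr hx)).2.continuousAt).continuousWithinAt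
  have hderiv : ∀ x ∈ interior (Ici r), 0 < deriv (fun ρ => ∫ u in Ioi (0:ℝ), mker α ρ u) x := by
    rw [interior_Ici]
    intro x hx
    have hx0 : (0:ℝ) < x := lt_trans hr hx
    rw [(hasDeriv_J α hx0).2.deriv]
    exact D_pos hα hx0
  have hmono := strictMonoOn_of_deriv_pos (convex_Ici r) hcont hderiv
  have hFR : (∫ u in Ioi (0:ℝ), mker α r u) < ∫ u in Ioi (0:ℝ), mker α R u :=
    hmono self_mem_Ici (le_of_lt hrR) hrR
  have key : 2 * Real.exp r * r^α * macdonaldK α r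
      < 2 * Real.exp R * R^α * macdonaldK α R := by
    rw [← J_eq α hr, ← J_eq α hR]
    exact hFR
  have hKR : 0 < macdonaldK α R := macdonaldK_pos α hR
  rw [div_lt_iff₀ hKR, Real.exp_sub, Real.div_rpow hR.le hr.le]
  rw [show Real.exp R / Real.exp r * (R^α/r^α) * macdonaldK α R
      = (Real.exp R * R^α * macdonaldK α R) / (Real.exp r * r^α) by field_simp]
  rw [lt_div_iff₀ (by positivity)]
  calc macdonaldK α r * (Real.exp r * r^α) = 2⁻¹ * (2 * Real.exp r * r^α * macdonaldK α r) := by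
        ring
    _ < 2⁻¹ * (2 * Real.exp R * R^α * macdonaldK α R) := by linarith
    _ = Real.exp R * R^α * macdonaldK α R := by ring
end

section
/- For all real θ > 0 and real s ≥ 1, the ratio sinhc(θ(s−1)/2) · sinhc(θ(s+1)/2) / sinhc(θ) is at most e^{θ(s−1)}, where sinhc x = sinh x / x (sinhc 0 = 1). -/
open Real

/-- `sinhc x = sinh x / x`, with `sinhc 0 = 1`. -/
noncomputable def sinhc (x : ℝ) : ℝ := if x = 0 then 1 else Real.sinh x / x

lemma sinhc_aux_slope (x y : ℝ) (hx : 0 < x) (hxy : x ≤ y) :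
    x * (1 - Real.exp (-y)) ≤ y * (1 - Real.exp (-x)) := by
  have hy : 0 < y := lt_of_lt_of_le hx hxy
  have h := convexOn_exp.secant_mono (a := (0:ℝ)) (x := -y) (y := -x)
    trivial trivial trivial (by linarith) (by linarith) (by linarith)
  simp only [Real.exp_zero] at h
  have e1 : (Real.exp (-y) - 1) / (-y - 0) = (1 - Real.exp (-y)) / y := by
    rw [show -y - 0 = -y by ring, div_neg]; ring
  have e2 : (Real.exp (-x) - 1) / (-x - 0) = (1 - Real.exp (-x)) / x := by
    rw [show -x - 0 = -x by ring, div_neg]; ring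
  rw [e1, e2, div_le_div_iff₀ hy hx] at h
  nlinarith [h]

lemma sinhc_key (a θ : ℝ) (ha : 0 < a) (hθ : 0 < θ) :
    θ * ((1 - Real.exp (-(2*a))) * (1 - Real.exp (-(2*(a+θ))))) ≤
      2*a*(a+θ)*(1 - Real.exp (-(2*θ))) := by
  have h1 : 1 - Real.exp (-(2*a)) ≤ 2*a := by nlinarith [Real.add_one_le_exp (-(2*a))]
  have h2 : (2*θ) * (1 - Real.exp (-(2*(a+θ)))) ≤ (2*(a+θ)) * (1 - Real.exp (-(2*θ))) :=
    sinhc_aux_slope (2*θ) (2*(a+θ)) (by linarith) (by linarith)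
  have h3 : 0 ≤ 1 - Real.exp (-(2*a)) := by
    have : Real.exp (-(2*a)) ≤ 1 := Real.exp_le_one_iff.mpr (by linarith)
    linarith
  have h4 : 0 ≤ 1 - Real.exp (-(2*(a+θ))) := by
    have : Real.exp (-(2*(a+θ))) ≤ 1 := Real.exp_le_one_iff.mpr (by nlinarith)
    linarith
  nlinarith [mul_le_mul_of_nonneg_left h2 h3, mul_le_mul_of_nonneg_right h1 h4]

lemma sinhc_main (a θ : ℝ) (ha : 0 < a) (hθ : 0 < θ) :
    Real.sinh a * Real.sinh (a+θ) * θ ≤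
      Real.exp (2*a) * Real.sinh θ * (a * (a+θ)) := by
  have e1 : Real.sinh a = Real.exp a * (1 - Real.exp (-(2*a))) / 2 := by
    have h : Real.exp a * Real.exp (-(2*a)) = Real.exp (-a) := by
      rw [← Real.exp_add]; ring_nf
    rw [Real.sinh_eq]; nlinarith [h]
  have e2 : Real.sinh (a+θ) = Real.exp (a+θ) * (1 - Real.exp (-(2*(a+θ)))) / 2 := by
    have h : Real.exp (a+θ) * Real.exp (-(2*(a+θ))) = Real.exp (-(a+θ)) := by
      rw [← Real.exp_add]; ring_nf
    rw [Real.sinh_eq]; nlinarith [h]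
  have e3 : Real.sinh θ = Real.exp θ * (1 - Real.exp (-(2*θ))) / 2 := by
    have h : Real.exp θ * Real.exp (-(2*θ)) = Real.exp (-θ) := by
      rw [← Real.exp_add]; ring_nf
    rw [Real.sinh_eq]; nlinarith [h]
  have e4 : Real.exp (2*a) * Real.exp θ = Real.exp a * Real.exp (a+θ) := by
    rw [← Real.exp_add, ← Real.exp_add]; ring_nf
  have hkey := sinhc_key a θ ha hθ
  have hP : (0:ℝ) < Real.exp a * Real.exp (a+θ) := by positivity
  have h5 := mul_le_mul_of_nonneg_left hkey hP.le
  have h6 : Real.exp (2*a) * (Real.exp θ * (1 - Real.exp (-(2*θ))) / 2) * (a * (a+θ))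
      = Real.exp a * Real.exp (a+θ) * (2*a*(a+θ)*(1 - Real.exp (-(2*θ)))) / 4 := by
    rw [← e4]; ring
  have h7 : Real.exp a * (1 - Real.exp (-(2*a))) / 2 *
        (Real.exp (a+θ) * (1 - Real.exp (-(2*(a+θ)))) / 2) * θ
      = Real.exp a * Real.exp (a+θ) *
        (θ * ((1 - Real.exp (-(2*a))) * (1 - Real.exp (-(2*(a+θ)))))) / 4 := by
    ring
  rw [e1, e2, e3, h6, h7]
  linarith [h5]

theorem sinhc_ratio_le (θ s : ℝ) (hθ : 0 < θ) (hs : 1 ≤ s) :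
    sinhc (θ * (s - 1) / 2) * sinhc (θ * (s + 1) / 2) / sinhc θ
      ≤ Real.exp (θ * (s - 1)) := by
  have hsθ : 0 < Real.sinh θ := Real.sinh_pos_iff.mpr hθ
  have hsc : sinhc θ = Real.sinh θ / θ := by simp [sinhc, hθ.ne']
  rcases eq_or_lt_of_le hs with h1 | h1
  · subst h1
    have h0 : θ * ((1:ℝ) - 1) / 2 = 0 := by ring
    have h2 : θ * ((1:ℝ) + 1) / 2 = θ := by ring
    rw [h0, h2]
    have : sinhc 0 = 1 := by simp [sinhc]
    rw [this, one_mul, div_self (by rw [hsc]; positivity)]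
    simp
  · have hs1 : 0 < s - 1 := by linarith
    set a := θ * (s - 1) / 2 with hadef
    set b := θ * (s + 1) / 2 with hbdef
    have ha : 0 < a := by rw [hadef]; positivity
    have hb : 0 < b := by rw [hbdef]; nlinarith
    have hbeq : b = a + θ := by rw [hadef, hbdef]; ring
    have hexp : θ * (s - 1) = 2 * a := by rw [hadef]; ring
    rw [show sinhc a = Real.sinh a / a by simp [sinhc, ha.ne'],
        show sinhc b = Real.sinh b / b by simp [sinhc, hb.ne'], hsc]
    rw [div_le_iff₀ (div_pos hsθ hθ), div_mul_div_comm,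
        div_le_iff₀ (by positivity : (0:ℝ) < a * b), hexp]
    have hm := sinhc_main a θ ha hθ
    rw [← hbeq] at hm
    have heq : Real.exp (2 * a) * (Real.sinh θ / θ) * (a * b)
        = Real.exp (2 * a) * Real.sinh θ * (a * b) / θ := by
      field_simp
    rw [heq, le_div_iff₀ hθ]
    nlinarith [hm]
end
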